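/- arXiv:2503.00220 — 3 statements merged into one kernel-verified Lean document; each statement's English description precedes it below -/
import Mathlib

section
/- Assume the scores S_1, …, S_n are distinct with probability 1. Then for any γ > 0, with probability at least 1 − 2·exp(−2nγ²) over the draw of the sample, 1 − α − γ ≤ P(Y_{n+1} ∈ Ĉ_n(X_{n+1}) | P_n) ≤ 1 − α + 1/n + γ. -/
open MeasureTheory

set_option maxHeartbeats 1000000
set_option linter.unusedSectionVars false

/-- The empirical `(1-α)`-quantile of the scores `S 1, …, S n`. -/
noncomputable def empQuant {n : ℕ} (α : ℝ) (S : Fin n → ℝ) : ℝ :=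
  sInf {t : ℝ | 1 - α ≤ ((Finset.univ.filter fun i => S i ≤ t).card : ℝ) / n}

section AuxHoeffding
open Real MeasureTheory ProbabilityTheory

lemma hoeff_scalar (p : ℝ) (hp0 : 0 ≤ p) (hp1 : p ≤ 1) (t : ℝ) (ht : 0 ≤ t) :
    1 + p * (exp t - 1) ≤ exp (t * p + t ^ 2 / 8) := by
  have hu : ∀ x : ℝ, 0 < 1 - p + p * exp x := by
    intro x
    rcases eq_or_lt_of_le hp1 with h | h
    · subst h; simpa using exp_pos x
    · have := mul_nonneg hp0 (exp_pos x).le; linarith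
  set u : ℝ → ℝ := fun x => 1 - p + p * exp x with hudef
  have hu' : ∀ x, HasDerivAt u (p * exp x) x := by
    intro x
    exact ((Real.hasDerivAt_exp x).const_mul p).const_add (1 - p)
  set g1 : ℝ → ℝ := fun x => p + x / 4 - p * exp x / u x with hg1def
  set g : ℝ → ℝ := fun x => x * p + x ^ 2 / 8 - Real.log (u x) with hgdef
  have hg' : ∀ x, HasDerivAt g (g1 x) x := by
    intro x
    have h1 : HasDerivAt (fun x : ℝ => x * p + x ^ 2 / 8) (p + x / 4) x := by
      have := ((hasDerivAt_id x).mul_const p).add ((hasDerivAt_pow 2 x).div_const 8)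
      exact this.congr_deriv (by rw [show (2:ℕ) - 1 = 1 from rfl]; push_cast; ring)
    have h2 : HasDerivAt (fun x => Real.log (u x)) (p * exp x / u x) x :=
      (hu' x).log (hu x).ne'
    exact h1.sub h2
  have hg1' : ∀ x, HasDerivAt g1 (1 / 4 - (p * exp x * u x - p * exp x * (p * exp x)) / (u x) ^ 2) x := by
    intro x
    have h2 : HasDerivAt (fun x => p * exp x / u x)
        ((p * exp x * u x - p * exp x * (p * exp x)) / (u x) ^ 2) x := by
      have := ((Real.hasDerivAt_exp x).const_mul p).div (hu' x) (hu x).ne'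
      exact this
    have h1 : HasDerivAt (fun x : ℝ => p + x / 4) (1 / 4) x := by
      simpa using ((hasDerivAt_id x).div_const 4).const_add p
    exact h1.sub h2
  have hg1mono : Monotone g1 := by
    apply monotone_of_deriv_nonneg (fun x => (hg1' x).differentiableAt)
    intro x
    rw [(hg1' x).deriv]
    have hux := hu x
    have hex := exp_pos x
    rw [sub_nonneg, div_le_iff₀ (by positivity)]
    have : u x = 1 - p + p * exp x := rfl
    nlinarith [sq_nonneg (1 - p - p * exp x)]
  have hg10 : g1 0 = 0 := by
    simp [hg1def, hudef, Real.exp_zero]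
  have hgmono : MonotoneOn g (Set.Ici 0) := by
    apply monotoneOn_of_deriv_nonneg (convex_Ici 0)
    · exact (Differentiable.continuous (fun x => (hg' x).differentiableAt)).continuousOn
    · exact fun x _ => ((hg' x).differentiableAt).differentiableWithinAt
    · intro x hx
      rw [(hg' x).deriv]
      rw [interior_Ici] at hx
      calc (0:ℝ) = g1 0 := hg10.symm
        _ ≤ g1 x := hg1mono hx.le
  have hg0 : g 0 = 0 := by simp [hgdef, hudef]
  have hgt : 0 ≤ g t := by
    rw [← hg0]
    exact hgmono (by simp) (by simpa using ht) ht
  have hlog : Real.log (u t) ≤ t * p + t ^ 2 / 8 := by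
    simp only [hgdef] at hgt; linarith
  calc 1 + p * (exp t - 1) = u t := by simp [hudef]; ring
    _ = exp (Real.log (u t)) := (Real.exp_log (hu t)).symm
    _ ≤ exp (t * p + t ^ 2 / 8) := exp_le_exp.mpr hlog

lemma chernoff_sum {Ω : Type*} [MeasurableSpace Ω] (P : Measure Ω) [IsProbabilityMeasure P]
    (n : ℕ) (E : Set Ω) (hE : MeasurableSet E) (p γ m : ℝ) (hγ : 0 < γ)
    (hp₀ : (P E).toReal ≤ p) (hp1 : p ≤ 1) (hm : (n : ℝ) * (p + γ) ≤ m) :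
    (Measure.pi fun _ : Fin n => P)
      {ω | m ≤ ∑ i : Fin n, E.indicator (fun _ => (1:ℝ)) (ω i)}
      ≤ ENNReal.ofReal (Real.exp (-2 * n * γ ^ 2)) := by
  letI : MeasureSpace Ω := ⟨P⟩
  have hvol : (volume : Measure (Fin n → Ω)) = Measure.pi fun _ : Fin n => P := rfl
  set t : ℝ := 4 * γ with htdef
  have ht : 0 ≤ t := by positivity
  set X : (Fin n → Ω) → ℝ := fun ω => ∑ i : Fin n, E.indicator (fun _ => (1:ℝ)) (ω i) with hXdef
  have hXm : Measurable X :=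
    Finset.measurable_sum _ fun i _ => (measurable_const.indicator hE).comp (measurable_pi_apply i)
  set f : Ω → ℝ := fun x => exp (t * E.indicator (fun _ => (1:ℝ)) x) with hfdef
  have hexpX : ∀ ω, exp (t * X ω) = ∏ i : Fin n, f (ω i) := by
    intro ω
    rw [hXdef, Finset.mul_sum, Real.exp_sum]
  have hind01 : ∀ x : Ω, 0 ≤ E.indicator (fun _ => (1:ℝ)) x ∧ E.indicator (fun _ => (1:ℝ)) x ≤ 1 := by
    intro x; by_cases h : x ∈ E <;> simp [h]
  -- integrability of exp (t * X)
  have hint : Integrable (fun ω => exp (t * X ω)) (volume : Measure (Fin n → Ω)) := by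
    apply Integrable.mono' (integrable_const (exp (t * n)))
    · exact (Real.measurable_exp.comp (measurable_const.mul hXm)).aestronglyMeasurable
    · refine Filter.Eventually.of_forall fun ω => ?_
      rw [Real.norm_eq_abs, abs_of_pos (exp_pos _), exp_le_exp]
      have hXle : X ω ≤ n := by
        rw [hXdef]
        calc ∑ i : Fin n, E.indicator (fun _ => (1:ℝ)) (ω i) ≤ ∑ _i : Fin n, (1:ℝ) :=
          Finset.sum_le_sum fun i _ => (hind01 (ω i)).2
        _ = n := by simp
      exact mul_le_mul_of_nonneg_left hXle ht
  -- the Chernoff bound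
  have hcher := measure_ge_le_exp_mul_mgf (μ := (volume : Measure (Fin n → Ω))) (X := X) m ht hint
  -- compute the mgf
  have hfi : f = fun x => 1 + E.indicator (fun _ => exp t - 1) x := by
    funext x; by_cases h : x ∈ E <;> simp [hfdef, h]
  have hintf : ∫ x, f x ∂P = 1 + (P E).toReal * (exp t - 1) := by
    rw [hfi]
    rw [integral_add (integrable_const 1) ((integrable_const (exp t - 1)).indicator hE)]
    rw [integral_indicator_const _ hE]
    simp [mul_comm, measureReal_def]
  have hmgf : mgf X (volume : Measure (Fin n → Ω)) t = (∫ x, f x ∂P) ^ n := by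
    rw [mgf]
    simp_rw [hexpX]
    rw [hvol, MeasureTheory.integral_fintype_prod_eq_pow (ι := Fin n) f, Fintype.card_fin]
  have hfb : ∫ x, f x ∂P ≤ exp (t * p + t ^ 2 / 8) := by
    rw [hintf]
    have h1 : 1 + (P E).toReal * (exp t - 1) ≤ 1 + p * (exp t - 1) := by
      have : (1:ℝ) ≤ exp t := by simpa using exp_le_exp.mpr ht
      nlinarith
    exact h1.trans (hoeff_scalar p (le_trans ENNReal.toReal_nonneg hp₀) hp1 t ht)
  have hfpos : 0 ≤ ∫ x, f x ∂P := by
    rw [hintf]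
    have : (1:ℝ) ≤ exp t := by simpa using exp_le_exp.mpr ht
    nlinarith [ENNReal.toReal_nonneg (a := P E)]
  have hfinal : ((volume : Measure (Fin n → Ω)) {ω | m ≤ X ω}).toReal ≤ exp (-2 * n * γ ^ 2) := by
    refine hcher.trans ?_
    rw [hmgf]
    calc exp (-t * m) * (∫ x, f x ∂P) ^ n
        ≤ exp (-t * m) * (exp (t * p + t ^ 2 / 8)) ^ n := by
          gcongr
      _ = exp (-t * m + n * (t * p + t ^ 2 / 8)) := by
          rw [← Real.exp_nat_mul, ← Real.exp_add]
      _ ≤ exp (-2 * n * γ ^ 2) := by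
          rw [exp_le_exp, htdef]
          have h1 : (4 * γ) * ((n : ℝ) * (p + γ)) ≤ (4 * γ) * m :=
            mul_le_mul_of_nonneg_left hm (by positivity)
          nlinarith [h1]
  rw [← hvol]
  calc (volume : Measure (Fin n → Ω)) {ω | m ≤ X ω}
      = ENNReal.ofReal (((volume : Measure (Fin n → Ω)) {ω | m ≤ X ω}).toReal) :=
        (ENNReal.ofReal_toReal (measure_ne_top _ _)).symm
    _ ≤ ENNReal.ofReal (exp (-2 * n * γ ^ 2)) := ENNReal.ofReal_le_ofReal hfinal

end AuxHoeffding

section AuxQuant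
variable {n : ℕ} {α : ℝ} (S : Fin n → ℝ)
variable {n : ℕ} {α : ℝ} (S : Fin n → ℝ)

lemma Tset_nonempty (hn : 0 < n) (hα1 : 0 ≤ α) :
    {t : ℝ | 1 - α ≤ ((Finset.univ.filter fun i => S i ≤ t).card : ℝ) / n}.Nonempty := by
  haveI : Nonempty (Fin n) := Fin.pos_iff_nonempty.mp hn
  refine ⟨Finset.univ.sup' Finset.univ_nonempty S, ?_⟩
  have h1 : (Finset.univ.filter fun i => S i ≤ Finset.univ.sup' Finset.univ_nonempty S) =
      Finset.univ := Finset.filter_true_of_mem fun i _ => Finset.le_sup' S (Finset.mem_univ i)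
  simp only [Set.mem_setOf_eq, h1, Finset.card_univ, Fintype.card_fin]
  rw [div_self (by positivity : (n:ℝ) ≠ 0)]
  linarith

lemma Tset_bddBelow (hn : 0 < n) (hα2 : α < 1) :
    BddBelow {t : ℝ | 1 - α ≤ ((Finset.univ.filter fun i => S i ≤ t).card : ℝ) / n} := by
  haveI : Nonempty (Fin n) := Fin.pos_iff_nonempty.mp hn
  refine ⟨Finset.univ.inf' Finset.univ_nonempty S, fun t ht => ?_⟩
  simp only [Set.mem_setOf_eq] at ht
  have hpos : 0 < (Finset.univ.filter fun i => S i ≤ t).card := by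
    rcases Nat.eq_zero_or_pos (Finset.univ.filter fun i => S i ≤ t).card with h | h
    · rw [h] at ht
      simp only [Nat.cast_zero, zero_div] at ht
      linarith
    · exact h
  obtain ⟨i, hi⟩ := Finset.card_pos.mp hpos
  have := (Finset.mem_filter.mp hi).2
  exact le_trans (Finset.inf'_le S (Finset.mem_univ i)) this

lemma quant_card_lb (hn : 0 < n) (hα0 : 0 ≤ α) (hα2 : α < 1) :
    (n : ℝ) * (1 - α) ≤ ((Finset.univ.filter fun i => S i ≤ empQuant α S).card : ℝ) := by
  set T := {t : ℝ | 1 - α ≤ ((Finset.univ.filter fun i => S i ≤ t).card : ℝ) / n} with hT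
  have htne := Tset_nonempty S hn hα0
  have hbdd := Tset_bddBelow S hn hα2
  set c := empQuant α S with hc
  have hcdef : c = sInf T := rfl
  classical
  set I := Finset.univ.filter fun i => c < S i with hI
  set ε : ℝ := if hIne : I.Nonempty then I.inf' hIne S - c else 1 with hε
  have hεpos : 0 < ε := by
    rw [hε]
    split_ifs with hIne
    · rw [sub_pos, Finset.lt_inf'_iff]
      exact fun i hi => (Finset.mem_filter.mp hi).2
    · norm_num
  obtain ⟨t, htT, htlt⟩ : ∃ t ∈ T, t < c + ε := by
    apply (csInf_lt_iff hbdd htne).mp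
    rw [← hcdef]; linarith
  have hsub : (Finset.univ.filter fun i => S i ≤ t) ⊆ Finset.univ.filter fun i => S i ≤ c := by
    intro i hi
    have hit := (Finset.mem_filter.mp hi).2
    refine Finset.mem_filter.mpr ⟨Finset.mem_univ i, ?_⟩
    by_contra hic
    push_neg at hic
    have hiI : i ∈ I := Finset.mem_filter.mpr ⟨Finset.mem_univ i, hic⟩
    have hIne : I.Nonempty := ⟨i, hiI⟩
    have : ε = I.inf' hIne S - c := by rw [hε, dif_pos hIne]
    have h2 : c + ε ≤ S i := by
      rw [this]
      have := Finset.inf'_le S hiI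
      linarith
    linarith
  have ht2 : (n : ℝ) * (1 - α) ≤ ((Finset.univ.filter fun i => S i ≤ t).card : ℝ) := by
    have := htT
    simp only [hT, Set.mem_setOf_eq] at this
    rw [le_div_iff₀ (by exact_mod_cast hn : (0:ℝ) < n)] at this
    linarith [this]
  calc (n : ℝ) * (1 - α) ≤ ((Finset.univ.filter fun i => S i ≤ t).card : ℝ) := ht2
    _ ≤ _ := by exact_mod_cast Finset.card_le_card hsub

lemma quant_card_ub (hn : 0 < n) (hα0 : 0 ≤ α) (hα2 : α < 1)
    (hinj : Function.Injective S) :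
    ((Finset.univ.filter fun i => S i ≤ empQuant α S).card : ℝ) < (n : ℝ) * (1 - α) + 1 := by
  classical
  set T := {t : ℝ | 1 - α ≤ ((Finset.univ.filter fun i => S i ≤ t).card : ℝ) / n} with hT
  have htne := Tset_nonempty S hn hα0
  have hbdd := Tset_bddBelow S hn hα2
  set c := empQuant α S with hc
  have hcdef : c = sInf T := rfl
  have hlb := quant_card_lb S hn hα0 hα2
  have hne : (Finset.univ.filter fun i => S i ≤ c).Nonempty := by
    rw [← Finset.card_pos]
    by_contra h
    push_neg at h
    simp only [Nat.lt_one_iff, Nat.le_zero] at h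
    rw [h] at hlb
    simp only [Nat.cast_zero] at hlb
    nlinarith [hlb, (by exact_mod_cast hn : (0:ℝ) < n)]
  set m := (Finset.univ.filter fun i => S i ≤ c).sup' hne S with hm
  have hmle : m ≤ c := Finset.sup'_le _ _ fun i hi => (Finset.mem_filter.mp hi).2
  have hfeq : (Finset.univ.filter fun i => S i ≤ m) = Finset.univ.filter fun i => S i ≤ c := by
    apply Finset.Subset.antisymm
    · intro i hi
      obtain ⟨hiu, hile⟩ := Finset.mem_filter.mp hi
      exact Finset.mem_filter.mpr ⟨hiu, le_trans hile hmle⟩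
    · intro i hi
      have h2 : S i ≤ m := Finset.le_sup' S hi
      exact Finset.mem_filter.mpr ⟨Finset.mem_univ i, h2⟩
  have hmT : m ∈ T := by
    simp only [hT, Set.mem_setOf_eq, hfeq]
    rw [le_div_iff₀ (by exact_mod_cast hn : (0:ℝ) < n)]
    linarith
  have hcm : c = m := le_antisymm (hcdef ▸ csInf_le hbdd hmT) hmle
  obtain ⟨j, hjmem, hjval⟩ := Finset.exists_mem_eq_sup' hne S
  have hSj : S j = c := by rw [hcm, hm, hjval]
  by_contra hcon
  push_neg at hcon
  set J := Finset.univ.filter fun i => S i < c with hJ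
  set t : ℝ := if hJne : J.Nonempty then J.sup' hJne S else c - 1 with ht
  have htlt : t < c := by
    rw [ht]
    split_ifs with hJne
    · rw [Finset.sup'_lt_iff]
      exact fun i hi => (Finset.mem_filter.mp hi).2
    · linarith
  have hset : (Finset.univ.filter fun i => S i ≤ t) =
      (Finset.univ.filter fun i => S i ≤ c).erase j := by
    ext i
    simp only [Finset.mem_erase, Finset.mem_filter, Finset.mem_univ, true_and]
    constructor
    · intro hi
      have hic : S i < c := lt_of_le_of_lt hi htlt
      refine ⟨?_, hic.le⟩
      intro hij
      rw [hij, hSj] at hic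
      exact absurd rfl (ne_of_lt hic)
    · rintro ⟨hij, hile⟩
      have hSne : S i ≠ c := fun h => hij (hinj (h.trans hSj.symm))
      have hilt : S i < c := lt_of_le_of_ne hile hSne
      have hiJ : i ∈ J := Finset.mem_filter.mpr ⟨Finset.mem_univ i, hilt⟩
      have hJne : J.Nonempty := ⟨i, hiJ⟩
      rw [ht, dif_pos hJne]
      exact Finset.le_sup' S hiJ
  have hcard : (Finset.univ.filter fun i => S i ≤ t).card =
      (Finset.univ.filter fun i => S i ≤ c).card - 1 := by
    rw [hset, Finset.card_erase_of_mem hjmem]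
  have hcard1 : 1 ≤ (Finset.univ.filter fun i => S i ≤ c).card := Finset.card_pos.mpr hne
  have htT : t ∈ T := by
    simp only [hT, Set.mem_setOf_eq]
    rw [le_div_iff₀ (by exact_mod_cast hn : (0:ℝ) < n), hcard]
    have : (((Finset.univ.filter fun i => S i ≤ c).card - 1 : ℕ) : ℝ) =
        ((Finset.univ.filter fun i => S i ≤ c).card : ℝ) - 1 := by
      push_cast [hcard1]
      ring
    rw [this]
    linarith
  have : c ≤ t := hcdef ▸ csInf_le hbdd htT
  linarith


end AuxQuant

section AuxCDF
variable {Ω : Type*} [MeasurableSpace Ω] (P : Measure Ω) [IsProbabilityMeasure P]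
  (s : Ω → ℝ) (F : ℝ → ℝ)

section CDF
variable (hF : ∀ t, F t = (P {p | s p ≤ t}).toReal)
include hF

lemma F_mono : Monotone F := by
  intro a b hab
  rw [hF a, hF b]
  exact ENNReal.toReal_mono (measure_ne_top _ _)
    (measure_mono fun x hx => le_trans hx hab)

lemma F_nonneg : ∀ t, 0 ≤ F t := fun t => (hF t) ▸ ENNReal.toReal_nonneg

lemma F_le_one : ∀ t, F t ≤ 1 := by
  intro t
  rw [hF t]
  exact ENNReal.toReal_le_of_le_ofReal zero_le_one (by simpa using prob_le_one)

-- existence of M with c ≤ F M, for c < 1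
lemma exists_F_ge (c : ℝ) (hc1 : c < 1) : ∃ M : ℝ, c ≤ F M := by
  rcases le_or_gt c 0 with hc0 | hc0
  · exact ⟨0, le_trans hc0 (F_nonneg P s F hF 0)⟩
  have hmono : Monotone fun m : ℕ => {x | s x ≤ (m : ℝ)} := by
    intro a b hab x hx
    simp only [Set.mem_setOf_eq] at hx ⊢
    exact le_trans hx (by exact_mod_cast hab)
  have huniv : ⋃ m : ℕ, {x | s x ≤ (m : ℝ)} = Set.univ := by
    ext x
    simp only [Set.mem_iUnion, Set.mem_setOf_eq, Set.mem_univ, iff_true]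
    obtain ⟨m, hm⟩ := exists_nat_ge (s x)
    exact ⟨m, hm⟩
  have htend := tendsto_measure_iUnion_atTop (μ := P) hmono
  rw [huniv, measure_univ] at htend
  have hlt : ENNReal.ofReal c < 1 := by
    rw [← ENNReal.ofReal_one]
    exact ENNReal.ofReal_lt_ofReal_iff_of_nonneg hc0.le |>.mpr hc1
  have := htend.eventually_const_lt hlt
  obtain ⟨M, hM⟩ := this.exists
  refine ⟨M, ?_⟩
  rw [hF M]
  calc c = (ENNReal.ofReal c).toReal := (ENNReal.toReal_ofReal hc0.le).symm
    _ ≤ (P {p | s p ≤ (M:ℝ)}).toReal := ENNReal.toReal_mono (measure_ne_top _ _) hM.le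

-- existence of a with F a < c, for c > 0
lemma exists_F_lt (hs : Measurable s) (c : ℝ) (hc0 : 0 < c) : ∃ a : ℝ, F a < c := by
  have hanti : Antitone fun m : ℕ => {x | s x ≤ -(m : ℝ)} := by
    intro a b hab x hx
    simp only [Set.mem_setOf_eq] at hx ⊢
    refine le_trans hx (by simp; exact_mod_cast hab)
  have hempty : ⋂ m : ℕ, {x | s x ≤ -(m : ℝ)} = ∅ := by
    ext x
    simp only [Set.mem_iInter, Set.mem_setOf_eq, Set.mem_empty_iff_false, iff_false]
    push_neg
    obtain ⟨m, hm⟩ := exists_nat_gt (-(s x))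
    exact ⟨m, by linarith⟩
  have htend := tendsto_measure_iInter_atTop (μ := P) (s := fun m : ℕ => {x | s x ≤ -(m:ℝ)})
    (fun m => ((hs measurableSet_Iic).nullMeasurableSet :
      NullMeasurableSet {x | s x ≤ -(m:ℝ)} P)) hanti ⟨0, measure_ne_top _ _⟩
  rw [hempty, measure_empty] at htend
  have hlt : (0 : ENNReal) < ENNReal.ofReal c := by
    simp [ENNReal.ofReal_pos, hc0]
  have := htend.eventually_lt_const hlt
  obtain ⟨M, hM⟩ := this.exists
  refine ⟨-(M : ℝ), ?_⟩
  rw [hF (-(M:ℝ))]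
  calc (P {p | s p ≤ -(M:ℝ)}).toReal < (ENNReal.ofReal c).toReal :=
        ENNReal.toReal_strict_mono ENNReal.ofReal_ne_top hM
    _ = c := ENNReal.toReal_ofReal hc0.le

-- sInf of the superlevel set of F
lemma Fset_props (hs : Measurable s) (c : ℝ) (hc0 : 0 < c) (hc1 : c < 1) :
    {t : ℝ | c ≤ F t}.Nonempty ∧ BddBelow {t : ℝ | c ≤ F t} := by
  obtain ⟨M, hM⟩ := exists_F_ge P s F hF c hc1
  obtain ⟨a, ha⟩ := exists_F_lt P s F hF hs c hc0
  refine ⟨⟨M, hM⟩, ⟨a, fun t ht => ?_⟩⟩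
  by_contra h
  push_neg at h
  exact absurd (le_trans ht (F_mono P s F hF h.le)) (not_le.mpr ha)

-- P {s x < u} ≤ ofReal c if F v < c for all v < u
lemma measure_lt_le (hs : Measurable s) (u c : ℝ) (hc : ∀ v < u, F v < c) :
    P {x | s x < u} ≤ ENNReal.ofReal c := by
  have hun : {x | s x < u} = ⋃ m : ℕ, {x | s x ≤ u - 1 / (m + 1)} := by
    ext x
    simp only [Set.mem_setOf_eq, Set.mem_iUnion]
    constructor
    · intro hx
      obtain ⟨m, hm⟩ := exists_nat_one_div_lt (show 0 < u - s x by linarith)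
      exact ⟨m, by push_cast at hm ⊢; linarith⟩
    · rintro ⟨m, hm⟩
      have : 0 < 1 / ((m : ℝ) + 1) := by positivity
      linarith
  rw [hun]
  have hmono : Monotone fun m : ℕ => {x | s x ≤ u - 1 / ((m:ℝ) + 1)} := by
    intro a b hab x hx
    simp only [Set.mem_setOf_eq] at hx ⊢
    have h1 : 1 / ((b:ℝ) + 1) ≤ 1 / ((a:ℝ) + 1) := by
      apply one_div_le_one_div_of_le (by positivity)
      exact_mod_cast Nat.add_le_add_right hab 1
    linarith
  have htend := tendsto_measure_iUnion_atTop (μ := P) hmono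
  refine le_of_tendsto' htend fun m => ?_
  have hp : (0:ℝ) < 1 / ((m:ℝ) + 1) := by positivity
  have hv : F (u - 1 / ((m:ℝ) + 1)) < c := hc _ (by linarith)
  rw [hF] at hv
  calc P {x | s x ≤ u - 1 / ((m:ℝ) + 1)}
      = ENNReal.ofReal ((P {x | s x ≤ u - 1 / ((m:ℝ) + 1)}).toReal) :=
        (ENNReal.ofReal_toReal (measure_ne_top _ _)).symm
    _ ≤ ENNReal.ofReal c := ENNReal.ofReal_le_ofReal hv.le

-- super-uniformity: P(F(s x) < c) ≤ c
lemma superuniform (hs : Measurable s) (c : ℝ) (hc0 : 0 < c) (hc1 : c < 1) :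
    (P {x | F (s x) < c}).toReal ≤ c := by
  obtain ⟨htne, hbdd⟩ := Fset_props P s F hF hs c hc0 hc1
  set t0 := sInf {t : ℝ | c ≤ F t} with ht0
  have hkey : ∀ x : ℝ, F x < c → x ≤ t0 := by
    intro x hx
    by_contra h
    push_neg at h
    obtain ⟨t, htmem, htlt⟩ := (csInf_lt_iff hbdd htne).mp h
    exact absurd (le_trans htmem (F_mono P s F hF htlt.le)) (not_le.mpr hx)
  have hbelow : ∀ v < t0, F v < c := by
    intro v hv
    by_contra h
    push_neg at h
    exact absurd (csInf_le hbdd h) (not_le.mpr hv)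
  rcases lt_or_ge (F t0) c with hFt | hFt
  · -- everything with F (s x) < c has s x ≤ t0
    have hsub : {x | F (s x) < c} ⊆ {x | s x ≤ t0} := fun x hx => hkey _ hx
    calc (P {x | F (s x) < c}).toReal ≤ (P {x | s x ≤ t0}).toReal :=
          ENNReal.toReal_mono (measure_ne_top _ _) (measure_mono hsub)
      _ = F t0 := (hF t0).symm
      _ ≤ c := hFt.le
  · have hsub : {x | F (s x) < c} ⊆ {x | s x < t0} := by
      intro x hx
      simp only [Set.mem_setOf_eq] at hx ⊢
      have h1 := hkey _ hx
      rcases lt_or_eq_of_le h1 with h | h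
      · exact h
      · rw [h] at hx; exact absurd hFt (not_le.mpr hx)
    calc (P {x | F (s x) < c}).toReal ≤ (P {x | s x < t0}).toReal :=
          ENNReal.toReal_mono (measure_ne_top _ _) (measure_mono hsub)
      _ ≤ (ENNReal.ofReal c).toReal :=
          ENNReal.toReal_mono ENNReal.ofReal_ne_top (measure_lt_le P s F hF hs t0 c hbelow)
      _ = c := ENNReal.toReal_ofReal hc0.le

-- intermediate value: if no atoms, F attains c
lemma exists_F_eq (hs : Measurable s) (hatom : ∀ t, P {x | s x = t} = 0)
    (c : ℝ) (hc0 : 0 < c) (hc1 : c < 1) : ∃ t, F t = c := by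
  obtain ⟨htne, hbdd⟩ := Fset_props P s F hF hs c hc0 hc1
  set t0 := sInf {t : ℝ | c ≤ F t} with ht0
  refine ⟨t0, le_antisymm ?_ ?_⟩
  · -- F t0 ≤ c, via no atom at t0
    have hbelow : ∀ v < t0, F v < c := by
      intro v hv
      by_contra h
      push_neg at h
      exact absurd (csInf_le hbdd h) (not_le.mpr hv)
    have hsplit : P {x | s x ≤ t0} ≤ P {x | s x < t0} + P {x | s x = t0} := by
      refine le_trans (measure_mono ?_) (measure_union_le _ _)
      intro x hx
      simp only [Set.mem_setOf_eq] at hx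
      rcases lt_or_eq_of_le hx with h | h
      · exact Or.inl h
      · exact Or.inr h
    rw [hatom t0, add_zero] at hsplit
    have h2 := le_trans hsplit (measure_lt_le P s F hF hs t0 c hbelow)
    rw [hF t0]
    calc (P {x | s x ≤ t0}).toReal ≤ (ENNReal.ofReal c).toReal :=
          ENNReal.toReal_mono ENNReal.ofReal_ne_top h2
      _ = c := ENNReal.toReal_ofReal hc0.le
  · -- c ≤ F t0, via right-continuity
    have hint : {x | s x ≤ t0} = ⋂ m : ℕ, {x | s x ≤ t0 + 1 / ((m:ℝ) + 1)} := by
      ext x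
      simp only [Set.mem_setOf_eq, Set.mem_iInter]
      constructor
      · intro hx m
        have : 0 < 1 / ((m:ℝ) + 1) := by positivity
        linarith
      · intro hx
        by_contra h
        push_neg at h
        obtain ⟨m, hm⟩ := exists_nat_one_div_lt (show 0 < s x - t0 by linarith)
        have := hx m
        push_cast at hm
        linarith
    have hanti : Antitone fun m : ℕ => {x | s x ≤ t0 + 1 / ((m:ℝ) + 1)} := by
      intro a b hab x hx
      simp only [Set.mem_setOf_eq] at hx ⊢
      have h1 : 1 / ((b:ℝ) + 1) ≤ 1 / ((a:ℝ) + 1) := by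
        apply one_div_le_one_div_of_le (by positivity)
        exact_mod_cast Nat.add_le_add_right hab 1
      linarith
    have htend := tendsto_measure_iInter_atTop (μ := P)
      (s := fun m : ℕ => {x | s x ≤ t0 + 1 / ((m:ℝ) + 1)})
      (fun m => ((hs measurableSet_Iic).nullMeasurableSet :
        NullMeasurableSet {x | s x ≤ t0 + 1 / ((m:ℝ) + 1)} P)) hanti ⟨0, measure_ne_top _ _⟩
    rw [← hint] at htend
    have hge : ∀ m : ℕ, ENNReal.ofReal c ≤ P {x | s x ≤ t0 + 1 / ((m:ℝ) + 1)} := by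
      intro m
      have hpos : 0 < 1 / ((m:ℝ) + 1) := by positivity
      obtain ⟨t, htmem, htlt⟩ := (csInf_lt_iff hbdd htne).mp
        (show t0 < t0 + 1 / ((m:ℝ) + 1) by linarith)
      have h1 : ENNReal.ofReal c ≤ P {x | s x ≤ t} := by
        have := htmem
        rw [Set.mem_setOf_eq, hF t] at this
        calc ENNReal.ofReal c ≤ ENNReal.ofReal ((P {x | s x ≤ t}).toReal) :=
              ENNReal.ofReal_le_ofReal this
          _ = P {x | s x ≤ t} := ENNReal.ofReal_toReal (measure_ne_top _ _)
      exact le_trans h1 (measure_mono fun x hx => le_trans hx htlt.le)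
    have h2 : ENNReal.ofReal c ≤ P {x | s x ≤ t0} := ge_of_tendsto' htend hge
    rw [hF t0]
    calc c = (ENNReal.ofReal c).toReal := (ENNReal.toReal_ofReal hc0.le).symm
      _ ≤ (P {x | s x ≤ t0}).toReal := ENNReal.toReal_mono (measure_ne_top _ _) h2

end CDF

-- atomlessness from a.s. distinctness
lemma atomless_of_distinct {n : ℕ} (hn2 : 2 ≤ n) (hs : Measurable s)
    (hdistinct : (Measure.pi fun _ : Fin n => P) {ω | ∃ i j, i ≠ j ∧ s (ω i) = s (ω j)} = 0) :
    ∀ t0, P {x | s x = t0} = 0 := by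
  intro t0
  by_contra h
  classical
  set E : Set Ω := {x | s x = t0} with hE
  have hEmeas : MeasurableSet E := hs (measurableSet_singleton t0)
  set A : Fin n → Set Ω := fun i => if (i : ℕ) < 2 then E else Set.univ with hA
  have hAmeas : ∀ i, MeasurableSet (A i) := by
    intro i
    by_cases hi : (i : ℕ) < 2
    · simpa only [hA, if_pos hi] using hEmeas
    · simp only [hA, if_neg hi, MeasurableSet.univ]
  have hsub : Set.univ.pi A ⊆ {ω : Fin n → Ω | ∃ i j, i ≠ j ∧ s (ω i) = s (ω j)} := by
    intro ω hω
    have h0 : ω ⟨0, by omega⟩ ∈ A ⟨0, by omega⟩ := hω _ (Set.mem_univ _)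
    have h1 : ω ⟨1, by omega⟩ ∈ A ⟨1, by omega⟩ := hω _ (Set.mem_univ _)
    rw [hA] at h0 h1
    simp only [show ((⟨0, by omega⟩ : Fin n) : ℕ) < 2 by simp, if_pos] at h0
    simp only [show ((⟨1, by omega⟩ : Fin n) : ℕ) < 2 by norm_num, if_pos] at h1
    refine ⟨⟨0, by omega⟩, ⟨1, by omega⟩, ?_, ?_⟩
    · intro hc
      have := Fin.mk.injEq (n := n) 0 (by omega) 1 (by omega) ▸ hc
      simp [Fin.mk.injEq] at hc
    · rw [h0, h1]
  have hcalc : (Measure.pi fun _ : Fin n => P) (Set.univ.pi A) = ∏ i : Fin n, P (A i) :=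
    Measure.pi_pi _ _
  have hne : ∏ i : Fin n, P (A i) ≠ 0 := by
    rw [Finset.prod_ne_zero_iff]
    intro i _
    by_cases hi : (i : ℕ) < 2
    · simpa only [hA, if_pos hi] using h
    · simp only [hA, if_neg hi, measure_univ, ne_eq, one_ne_zero, not_false_eq_true]
  have hle : (Measure.pi fun _ : Fin n => P) (Set.univ.pi A) ≤ 0 :=
    hdistinct ▸ measure_mono hsub
  rw [hcalc] at hle
  exact hne (le_antisymm hle (by simp))




end AuxCDF

/-- Corollary: distinct scores: if the scores `S_i = s(X_i, Y_i)` are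
distinct with probability 1, then for any `γ > 0`, with probability at least
`1 - 2 exp(-2 n γ²)` over the sample, the sample-conditional coverage `F(τ̂_n)` satisfies
`1 - α - γ ≤ F(τ̂_n) ≤ 1 - α + 1/n + γ`. -/
theorem statement_1
    {𝒳 𝒴 : Type*} [MeasurableSpace 𝒳] [MeasurableSpace 𝒴]
    (P : Measure (𝒳 × 𝒴)) [IsProbabilityMeasure P]
    (s : 𝒳 × 𝒴 → ℝ) (hs : Measurable s)
    (n : ℕ) (hn : 0 < n)
    (α : ℝ) (hα : α ∈ Set.Ioo (0 : ℝ) 1)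
    (γ : ℝ) (hγ : 0 < γ)
    (F : ℝ → ℝ) (hF : ∀ t, F t = (P {p | s p ≤ t}).toReal)
    (hdistinct :
      (Measure.pi fun _ : Fin n => P) {ω | ∃ i j, i ≠ j ∧ s (ω i) = s (ω j)} = 0) :
    1 - 2 * Real.exp (-2 * n * γ ^ 2) ≤
      ((Measure.pi fun _ : Fin n => P)
        {ω | 1 - α - γ ≤ F (empQuant α fun i => s (ω i)) ∧
             F (empQuant α fun i => s (ω i)) ≤ 1 - α + 1 / n + γ}).toReal := by
  classical
  obtain ⟨hα0, hα1⟩ := hα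
  set μ := Measure.pi fun _ : Fin n => P with hμ
  set e : ℝ := Real.exp (-2 * n * γ ^ 2) with he
  have hepos : 0 < e := Real.exp_pos _
  set τ : (Fin n → 𝒳 × 𝒴) → ℝ := fun ω => empQuant α fun i => s (ω i) with hτ
  set A₀ : Set (Fin n → 𝒳 × 𝒴) := {ω | F (τ ω) < 1 - α - γ} with hA₀
  set B₀ : Set (Fin n → 𝒳 × 𝒴) := {ω | 1 - α + 1 / n + γ < F (τ ω)} with hB₀
  set G : Set (Fin n → 𝒳 × 𝒴) :=
    {ω | 1 - α - γ ≤ F (empQuant α fun i => s (ω i)) ∧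
         F (empQuant α fun i => s (ω i)) ≤ 1 - α + 1 / n + γ} with hG
  have hFmono := F_mono P s F hF
  have hFmeas : Measurable F := hFmono.measurable
  have hnR : (0:ℝ) < n := by exact_mod_cast hn
  -- bound on A₀
  have hA : μ A₀ ≤ ENNReal.ofReal e := by
    by_cases hc : 0 < 1 - α - γ
    · set E : Set (𝒳 × 𝒴) := {x | F (s x) < 1 - α - γ} with hE
      have hEmeas : MeasurableSet E := (hFmeas.comp hs) measurableSet_Iio
      have hp₀ : (P E).toReal ≤ 1 - α - γ :=
        superuniform P s F hF hs _ hc (by linarith)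
      have hsub : A₀ ⊆ {ω | (n:ℝ) * (1 - α) ≤ ∑ i : Fin n, E.indicator (fun _ => (1:ℝ)) (ω i)} := by
        intro ω hω
        simp only [hA₀, Set.mem_setOf_eq] at hω ⊢
        have hsum : ∑ i : Fin n, E.indicator (fun _ => (1:ℝ)) (ω i)
            = ((Finset.univ.filter fun i => ω i ∈ E).card : ℝ) := by
          simp only [Set.indicator_apply]
          rw [Finset.sum_boole]
        rw [hsum]
        have hcard := quant_card_lb (fun i => s (ω i)) hn hα0.le hα1
        have hsubf : (Finset.univ.filter fun i => s (ω i) ≤ τ ω)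
            ⊆ Finset.univ.filter fun i => ω i ∈ E := by
          intro i hi
          have h2 := (Finset.mem_filter.mp hi).2
          refine Finset.mem_filter.mpr ⟨Finset.mem_univ i, ?_⟩
          have : F (s (ω i)) ≤ F (τ ω) := hFmono h2
          show F (s (ω i)) < 1 - α - γ
          linarith
        calc (n:ℝ) * (1 - α)
            ≤ ((Finset.univ.filter fun i => s (ω i) ≤ τ ω).card : ℝ) := hcard
          _ ≤ _ := by exact_mod_cast Finset.card_le_card hsubf
      calc μ A₀ ≤ μ {ω | (n:ℝ) * (1 - α) ≤ ∑ i : Fin n, E.indicator (fun _ => (1:ℝ)) (ω i)} :=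
            measure_mono hsub
        _ ≤ ENNReal.ofReal e := by
            rw [hμ, he]
            exact chernoff_sum P n E hEmeas (1 - α - γ) γ ((n:ℝ) * (1 - α)) hγ hp₀
              (by linarith) (le_of_eq (by ring))
    · have hempty : A₀ = ∅ := by
        rw [Set.eq_empty_iff_forall_notMem]
        intro ω hω
        simp only [hA₀, Set.mem_setOf_eq] at hω
        have := F_nonneg P s F hF (τ ω)
        push_neg at hc
        linarith
      rw [hempty]
      simp
  -- bound on B₀
  have hB : μ B₀ ≤ ENNReal.ofReal e := by
    by_cases hc' : 1 - α + 1 / n + γ < 1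
    · have hn2 : 2 ≤ n := by
        rcases Nat.lt_or_ge n 2 with h | h
        · have hn1 : n = 1 := by omega
          subst hn1
          norm_num at hc'
          linarith
        · exact h
      have hatom := atomless_of_distinct P s hn2 hs hdistinct
      have hc'0 : 0 < 1 - α + 1 / n + γ := by
        have : 0 < 1 / (n:ℝ) := by positivity
        linarith
      obtain ⟨t1, ht1⟩ := exists_F_eq P s F hF hs hatom _ hc'0 hc'
      set E : Set (𝒳 × 𝒴) := {x | 1 - α + 1 / n + γ < F (s x)} with hE
      have hEmeas : MeasurableSet E := (hFmeas.comp hs) measurableSet_Ioi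
      have hp₀ : (P E).toReal ≤ α - 1 / n - γ := by
        have hsubE : E ⊆ {x | s x ≤ t1}ᶜ := by
          intro x hx
          simp only [hE, Set.mem_setOf_eq] at hx
          simp only [Set.mem_compl_iff, Set.mem_setOf_eq]
          intro hle
          have : F (s x) ≤ F t1 := hFmono hle
          rw [ht1] at this
          linarith
        have hms : MeasurableSet {x : 𝒳 × 𝒴 | s x ≤ t1} := hs measurableSet_Iic
        have hcompl : (P ({x | s x ≤ t1}ᶜ)).toReal = 1 - F t1 := by
          rw [measure_compl hms (measure_ne_top _ _), measure_univ]
          rw [ENNReal.toReal_sub_of_le prob_le_one ENNReal.one_ne_top]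
          rw [hF t1]
          simp
        calc (P E).toReal ≤ (P ({x | s x ≤ t1}ᶜ)).toReal :=
              ENNReal.toReal_mono (measure_ne_top _ _) (measure_mono hsubE)
          _ = 1 - F t1 := hcompl
          _ = α - 1 / n - γ := by rw [ht1]; ring
      set D : Set (Fin n → 𝒳 × 𝒴) := {ω | ∃ i j, i ≠ j ∧ s (ω i) = s (ω j)} with hD
      have hsub : B₀ \ D ⊆
          {ω | (n:ℝ) * α - 1 ≤ ∑ i : Fin n, E.indicator (fun _ => (1:ℝ)) (ω i)} := by
        rintro ω ⟨hω1, hω2⟩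
        simp only [hB₀, Set.mem_setOf_eq] at hω1
        simp only [hD, Set.mem_setOf_eq] at hω2
        have hinj : Function.Injective fun i => s (ω i) := by
          intro i j hij
          by_contra hne
          exact hω2 ⟨i, j, hne, hij⟩
        have hub := quant_card_ub (fun i => s (ω i)) hn hα0.le hα1 hinj
        simp only [Set.mem_setOf_eq]
        have hsum : ∑ i : Fin n, E.indicator (fun _ => (1:ℝ)) (ω i)
            = ((Finset.univ.filter fun i => ω i ∈ E).card : ℝ) := by
          simp only [Set.indicator_apply]
          rw [Finset.sum_boole]
        rw [hsum]
        have hsubf : (Finset.univ.filter fun i => ¬ (s (ω i) ≤ τ ω))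
            ⊆ Finset.univ.filter fun i => ω i ∈ E := by
          intro i hi
          have h2 := (Finset.mem_filter.mp hi).2
          push_neg at h2
          refine Finset.mem_filter.mpr ⟨Finset.mem_univ i, ?_⟩
          have : F (τ ω) ≤ F (s (ω i)) := hFmono h2.le
          show 1 - α + 1 / n + γ < F (s (ω i))
          linarith
        have hcards : (Finset.univ.filter fun i => s (ω i) ≤ τ ω).card
            + (Finset.univ.filter fun i => ¬ (s (ω i) ≤ τ ω)).card = n := by
          rw [Finset.card_filter_add_card_filter_not]
          simp
        have hclb : (n:ℝ) * α - 1
            ≤ ((Finset.univ.filter fun i => ¬ (s (ω i) ≤ τ ω)).card : ℝ) := by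
          have h3 : ((Finset.univ.filter fun i => ¬ (s (ω i) ≤ τ ω)).card : ℝ)
              = (n:ℝ) - ((Finset.univ.filter fun i => s (ω i) ≤ τ ω).card : ℝ) := by
            have := hcards
            push_cast [← this]
            ring
          rw [h3]
          nlinarith [hub]
        calc (n:ℝ) * α - 1 ≤ _ := hclb
          _ ≤ _ := by exact_mod_cast Finset.card_le_card hsubf
      have hchain : μ B₀ ≤ μ (B₀ \ D) + μ D := by
        calc μ B₀ ≤ μ ((B₀ \ D) ∪ D) := measure_mono (by intro x hx; by_cases hxD : x ∈ D
                                                         · exact Or.inr hxD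
                                                         · exact Or.inl ⟨hx, hxD⟩)
          _ ≤ μ (B₀ \ D) + μ D := measure_union_le _ _
      rw [hμ] at hchain
      rw [hμ]
      have hD0 : (Measure.pi fun _ : Fin n => P) D = 0 := hdistinct
      calc (Measure.pi fun _ : Fin n => P) B₀
          ≤ (Measure.pi fun _ : Fin n => P) (B₀ \ D) + 0 := by rw [← hD0]; exact hchain
        _ = (Measure.pi fun _ : Fin n => P) (B₀ \ D) := add_zero _
        _ ≤ (Measure.pi fun _ : Fin n => P)
              {ω | (n:ℝ) * α - 1 ≤ ∑ i : Fin n, E.indicator (fun _ => (1:ℝ)) (ω i)} :=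
            measure_mono hsub
        _ ≤ ENNReal.ofReal e := by
            rw [he]
            refine chernoff_sum P n E hEmeas (α - 1 / n - γ) γ ((n:ℝ) * α - 1) hγ hp₀
              (by linarith) (le_of_eq ?_)
            field_simp
            ring
    · have hempty : B₀ = ∅ := by
        rw [Set.eq_empty_iff_forall_notMem]
        intro ω hω
        simp only [hB₀, Set.mem_setOf_eq] at hω
        have := F_le_one P s F hF (τ ω)
        push_neg at hc'
        linarith
      rw [hempty]
      simp
  -- assemble
  have hGsub : Gᶜ ⊆ A₀ ∪ B₀ := by
    intro ω hω
    simp only [hG, Set.mem_compl_iff, Set.mem_setOf_eq, not_and_or, not_le] at hω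
    rcases hω with h | h
    · exact Or.inl h
    · exact Or.inr h
  have hGc : μ Gᶜ ≤ ENNReal.ofReal e + ENNReal.ofReal e :=
    le_trans (measure_mono hGsub) (le_trans (measure_union_le _ _) (add_le_add hA hB))
  have h1 : (1 : ENNReal) ≤ μ G + μ Gᶜ := by
    calc (1 : ENNReal) = μ Set.univ := (measure_univ).symm
      _ = μ (G ∪ Gᶜ) := by rw [Set.union_compl_self]
      _ ≤ μ G + μ Gᶜ := measure_union_le _ _
  have hfin : μ G + μ Gᶜ ≠ ⊤ := ENNReal.add_ne_top.mpr ⟨measure_ne_top _ _, measure_ne_top _ _⟩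
  have h2 : (1:ℝ) ≤ (μ G).toReal + (μ Gᶜ).toReal := by
    have := ENNReal.toReal_mono hfin h1
    rwa [ENNReal.toReal_one, ENNReal.toReal_add (measure_ne_top _ _) (measure_ne_top _ _)] at this
  have h3 : (μ Gᶜ).toReal ≤ 2 * e := by
    have h4 := ENNReal.toReal_mono (by finiteness) hGc
    rwa [ENNReal.toReal_add ENNReal.ofReal_ne_top ENNReal.ofReal_ne_top,
      ENNReal.toReal_ofReal hepos.le, ← two_mul] at h4
  linarith
end

section
/- Let δ ∈ (0,1) and define γ_n(δ) = (4 log(1/δ))/(3n) + sqrt( ((4/(3n)) log(1/δ))² + (2α(1−α)/n) log(1/δ) ). Then with probability at least 1 − δ over the draw of the sample, 1 − α − γ_n(δ) ≤ P(Y_{n+1} ∈ Ĉ_n(X_{n+1}) | P_n). If additionally the score S = s(X, Y) has a density with respect to Lebesgue measure, then with probability at least 1 − 2δ, 1 − α − γ_n(δ) ≤ P(Y_{n+1} ∈ Ĉ_n(X_{n+1}) | P_n) ≤ 1 − α + γ_n(δ). -/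
open MeasureTheory

section helpers
open Set Filter Topology



lemma exp_one_sub_mul (t : ℝ) : (1 - t) * Real.exp t ≤ 1 := by
  have h := Real.add_one_le_exp (-t)
  have h2 := mul_le_mul_of_nonneg_right h (Real.exp_pos t).le
  rw [← Real.exp_add, neg_add_cancel, Real.exp_zero] at h2
  nlinarith [h2]

lemma exp_quad {t : ℝ} (ht : 0 ≤ t) : (Real.exp t - 1 - t) * (2 - 2/3*t) ≤ t^2 := by
  set f' : ℝ → ℝ := fun t => (4/3 - 2/3*t) * Real.exp t - 4/3 - 2/3*t with hf'
  have hD1 : ∀ x : ℝ, HasDerivAt f' ((2/3 - 2/3*x) * Real.exp x - 2/3) x := by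
    intro x
    have h1 : HasDerivAt (fun t : ℝ => 4/3 - 2/3*t) (-(2/3)) x := by
      simpa using ((hasDerivAt_id x).const_mul (2/3 : ℝ)).const_sub (4/3 : ℝ)
    have h2 := h1.mul (Real.hasDerivAt_exp x)
    have h3 : HasDerivAt (fun t : ℝ => (4/3 - 2/3*t) * Real.exp t - 4/3 - 2/3*t)
        ((-(2/3)) * Real.exp x + (4/3 - 2/3*x) * Real.exp x - 2/3) x := by
      exact (((h2.sub_const (4/3 : ℝ))).sub (by simpa using ((hasDerivAt_id x).const_mul (2/3 : ℝ))))
    convert h3 using 1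
    ring
  have hstep1 : ∀ x : ℝ, 0 ≤ x → f' x ≤ 0 := by
    intro x hx
    have hanti : AntitoneOn f' (Set.Ici (0:ℝ)) := by
      apply antitoneOn_of_deriv_nonpos (convex_Ici 0)
      · exact (fun y _ => ((hD1 y).differentiableAt.continuousAt.continuousWithinAt))
      · intro y hy
        exact (hD1 y).differentiableAt.differentiableWithinAt
      · intro y hy
        rw [(hD1 y).deriv]
        have := exp_one_sub_mul y
        nlinarith
    have h0 : f' 0 = 0 := by simp [hf', Real.exp_zero]
    have := hanti (Set.self_mem_Ici) (Set.mem_Ici.2 hx) hx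
    linarith [this.trans_eq h0]
  -- now f
  set f : ℝ → ℝ := fun t => (Real.exp t - 1 - t) * (2 - 2/3*t) - t^2 with hf
  have hD2 : ∀ x : ℝ, HasDerivAt f (f' x) x := by
    intro x
    have h1 : HasDerivAt (fun t : ℝ => Real.exp t - 1 - t) (Real.exp x - 1) x := by
      exact ((Real.hasDerivAt_exp x).sub_const 1).sub (hasDerivAt_id x)
    have h2 : HasDerivAt (fun t : ℝ => 2 - 2/3*t) (-(2/3)) x := by
      simpa using ((hasDerivAt_id x).const_mul (2/3 : ℝ)).const_sub (2 : ℝ)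
    have h3 := (h1.mul h2).sub (by simpa using (hasDerivAt_pow 2 x))
    refine (h3 : HasDerivAt f _ x).congr_deriv ?_
    simp [hf']
    ring
  have hanti : AntitoneOn f (Set.Ici (0:ℝ)) := by
    apply antitoneOn_of_deriv_nonpos (convex_Ici 0)
    · exact (fun y _ => ((hD2 y).differentiableAt.continuousAt.continuousWithinAt))
    · intro y hy
      exact (hD2 y).differentiableAt.differentiableWithinAt
    · intro y hy
      rw [(hD2 y).deriv]
      exact hstep1 y (le_of_lt (by simpa using hy))
  have h0 : f 0 = 0 := by simp [hf, Real.exp_zero]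
  have := hanti (Set.self_mem_Ici) (Set.mem_Ici.2 ht) ht
  have : f t ≤ 0 := this.trans_eq h0
  simpa [hf] using this


lemma mgf_bound {p l : ℝ} (hp0 : 0 ≤ p) (hp1 : p ≤ 1) (hl : 0 ≤ l) :
    1 + p * (Real.exp l - 1) ≤ Real.exp (l*p + p*(1-p)*(Real.exp l - 1 - l)) := by
  set w : ℝ → ℝ := fun t => -(t*p + p*(1-p)*(Real.exp t - 1 - t)) with hw
  set φ : ℝ → ℝ := fun t => (1 + p * (Real.exp t - 1)) * Real.exp (w t) with hφ
  have hDw : ∀ x : ℝ, HasDerivAt w (-(p + p*(1-p)*(Real.exp x - 1))) x := by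
    intro x
    have h1 : HasDerivAt (fun t : ℝ => t*p) p x := by simpa using (hasDerivAt_id x).mul_const p
    have h2 : HasDerivAt (fun t : ℝ => Real.exp t - 1 - t) (Real.exp x - 1) x := by
      exact ((Real.hasDerivAt_exp x).sub_const 1).sub (hasDerivAt_id x)
    have h3 := (h1.add (h2.const_mul (p*(1-p)))).neg
    exact h3
  have hDφ : ∀ x : ℝ, HasDerivAt φ
      ((p * Real.exp x) * Real.exp (w x)
        + (1 + p * (Real.exp x - 1)) * ((-(p + p*(1-p)*(Real.exp x - 1))) * Real.exp (w x))) x := by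
    intro x
    have h1 : HasDerivAt (fun t : ℝ => 1 + p * (Real.exp t - 1)) (p * Real.exp x) x := by
      simpa using (((Real.hasDerivAt_exp x).sub_const 1).const_mul p).const_add 1
    have h2 := h1.mul ((hDw x).exp)
    refine (h2 : HasDerivAt φ _ x).congr_deriv ?_
    ring
  have hanti : AntitoneOn φ (Set.Ici (0:ℝ)) := by
    apply antitoneOn_of_deriv_nonpos (convex_Ici 0)
    · exact fun y _ => ((hDφ y).differentiableAt.continuousAt.continuousWithinAt)
    · exact fun y _ => (hDφ y).differentiableAt.differentiableWithinAt
    · intro y hy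
      rw [(hDφ y).deriv]
      have hy0 : (0:ℝ) < y := by simpa using hy
      have hu : 0 ≤ Real.exp y - 1 := by nlinarith [Real.add_one_le_exp y]
      have hkey : p * Real.exp y - (1 + p * (Real.exp y - 1)) * (p + p*(1-p)*(Real.exp y - 1))
          = -(p^2*(1-p)*(Real.exp y - 1)^2) := by ring
      have hEw : 0 < Real.exp (w y) := Real.exp_pos _
      have : (p * Real.exp y) * Real.exp (w y)
        + (1 + p * (Real.exp y - 1)) * ((-(p + p*(1-p)*(Real.exp y - 1))) * Real.exp (w y))
        = (p * Real.exp y - (1 + p * (Real.exp y - 1)) * (p + p*(1-p)*(Real.exp y - 1))) * Real.exp (w y) := by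
        ring
      rw [this, hkey]
      have hnn : 0 ≤ p^2*(1-p)*(Real.exp y - 1)^2 :=
        mul_nonneg (mul_nonneg (sq_nonneg p) (by linarith)) (sq_nonneg _)
      nlinarith
  have hφ0 : φ 0 = 1 := by simp [hφ, hw, Real.exp_zero]
  have hφl : φ l ≤ 1 := by
    have := hanti (Set.self_mem_Ici) (Set.mem_Ici.2 hl) hl
    simpa [hφ0] using this
  have hE : Real.exp (w l) * Real.exp (-(w l)) = 1 := by rw [← Real.exp_add]; simp
  have hpos : 0 < Real.exp (-(w l)) := Real.exp_pos _
  have : (1 + p * (Real.exp l - 1)) ≤ Real.exp (-(w l)) := by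
    have h2 := mul_le_mul_of_nonneg_right hφl hpos.le
    rw [hφ] at h2
    simp only at h2
    nlinarith [h2, hE]
  have hwl : -(w l) = l*p + p*(1-p)*(Real.exp l - 1 - l) := by simp [hw]
  rw [← hwl]
  exact this

lemma per_sample {v γ L N p a : ℝ} (hv : 0 < v) (hγ : 0 < γ) (hN : 0 < N)
    (hp0 : 0 ≤ p) (ha1 : a ≤ 1) (hap : a - p = γ)
    (hva : v = a * (1 - a))
    (hid : γ^2 = 2*L/N * (v + 4*γ/3)) :
    1 + p * (Real.exp (γ/(v + 4*γ/3)) - 1) ≤ Real.exp ((γ/(v + 4*γ/3))*a - L/N) := by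
  set W : ℝ := v + 4*γ/3 with hW
  have hWpos : 0 < W := by rw [hW]; linarith
  set l : ℝ := γ/W with hldef
  have hl0 : 0 < l := div_pos hγ hWpos
  have hp1 : p ≤ 1 := by linarith
  have h1 := mgf_bound hp0 hp1 hl0.le
  refine h1.trans (Real.exp_le_exp.2 ?_)
  set X : ℝ := Real.exp l - 1 - l with hX
  have hXnn : 0 ≤ X := by rw [hX]; nlinarith [Real.add_one_le_exp l]
  have hpp : p*(1-p) ≤ v + γ := by nlinarith
  have h2 : p*(1-p)*X ≤ (v+γ)*X := mul_le_mul_of_nonneg_right hpp hXnn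
  have h3 : X * (2 - 2/3*l) ≤ l^2 := exp_quad hl0.le
  have hlW : l * W = γ := div_mul_cancel₀ γ hWpos.ne'
  have hid2 : (2 - 2/3*l)*W = 2*(v+γ) := by
    rw [hW]; linear_combination (-2/3) * hlW
  have hX2 : 2*(v+γ)*X ≤ l^2*W := by
    have h4 := mul_le_mul_of_nonneg_right h3 hWpos.le
    calc 2*(v+γ)*X = X * ((2 - 2/3*l) * W) := by rw [hid2]; ring
    _ ≤ l^2*W := by rw [← mul_assoc]; exact h4
  have hlγ : l*γ = 2*(L/N) := by
    have e1 : l*γ*W = γ^2 := by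
      rw [hldef]; field_simp
    have e2 : l*γ*W = 2*(L/N)*W := by
      rw [e1, hid]; ring
    exact mul_right_cancel₀ hWpos.ne' e2
  have e3 : l^2*W = l*γ := by
    calc l^2*W = l*(l*W) := by ring
    _ = l*γ := by rw [hlW]
  have e4 : l*a = l*p + l*γ := by
    have : a = p + γ := by linarith
    rw [this]; ring
  -- goal : l*p + p*(1-p)*X ≤ l*a - L/N
  have h5 : (v+γ)*X ≤ L/N := by
    rw [e3, hlγ] at hX2
    linarith
  clear_value X l W
  linarith [e4, hlγ, h2, h5]




lemma chernoff_bound {Ω : Type*} [MeasurableSpace Ω] (μ : Measure Ω) [IsProbabilityMeasure μ]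
    (n : ℕ) (A : Set Ω) (hA : MeasurableSet A) (l c d : ℝ) (hl : 0 ≤ l) (hd : 0 ≤ d)
    (hb : (1 + (μ A).toReal * (Real.exp l - 1)) ^ n ≤ Real.exp (l * c) * d) :
    (Measure.pi fun _ : Fin n => μ)
      {ω : Fin n → Ω | c ≤ ∑ i, (A.indicator (fun _ => (1:ℝ)) (ω i))} ≤ ENNReal.ofReal d := by
  letI : MeasureSpace Ω := ⟨μ⟩
  haveI : SigmaFinite (volume : Measure Ω) := (inferInstance : SigmaFinite μ)
  have hvol : (Measure.pi fun _ : Fin n => μ) = (volume : Measure (Fin n → Ω)) :=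
    (volume_pi).symm
  rw [hvol]
  haveI : IsProbabilityMeasure (volume : Measure (Fin n → Ω)) := by
    rw [← hvol]; infer_instance
  set g : Ω → ℝ := fun x => A.indicator (fun _ => Real.exp l - 1) x + 1 with hg
  have hel : 0 ≤ Real.exp l - 1 := by nlinarith [Real.add_one_le_exp l]
  have hgnn : ∀ x, 0 ≤ g x := by
    intro x
    have : (0:ℝ) ≤ A.indicator (fun _ => Real.exp l - 1) x :=
      Set.indicator_nonneg (fun y _ => hel) x
    simp only [hg]
    linarith [this]
  have hgint : Integrable g μ :=
    ((integrable_const (Real.exp l - 1)).indicator hA).add (integrable_const 1)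
  have hgval : ∫ x, g x ∂μ = 1 + (μ A).toReal * (Real.exp l - 1) := by
    rw [hg]
    rw [integral_add ((integrable_const (Real.exp l - 1)).indicator hA) (integrable_const 1)]
    rw [integral_indicator_const _ hA]
    simp [smul_eq_mul]
    rw [measureReal_def]
    ring
  set G : (Fin n → Ω) → ℝ := fun ω => ∏ i, g (ω i) with hG
  have hGint : Integrable G (volume : Measure (Fin n → Ω)) :=
    Integrable.fintype_prod (f := fun _ : Fin n => g) (fun _ => hgint)
  have hGval : ∫ ω, G ω = (1 + (μ A).toReal * (Real.exp l - 1)) ^ n := by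
    rw [hG]
    rw [volume_pi, integral_fintype_prod_eq_pow (ι := Fin n) g,
      show (∫ x, g x) = ∫ x, g x ∂μ from rfl, hgval]
    simp
  have hGnn : ∀ ω, 0 ≤ G ω := fun ω => Finset.prod_nonneg fun i _ => hgnn _
  have hmarkov := mul_meas_ge_le_integral_of_nonneg
    (μ := (volume : Measure (Fin n → Ω))) (ae_of_all _ hGnn) hGint (Real.exp (l * c))
  have hsub : {ω : Fin n → Ω | c ≤ ∑ i, (A.indicator (fun _ => (1:ℝ)) (ω i))}
      ⊆ {ω : Fin n → Ω | Real.exp (l * c) ≤ G ω} := by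
    intro ω hω
    have hGexp : G ω = Real.exp (l * ∑ i, (A.indicator (fun _ => (1:ℝ)) (ω i))) := by
      rw [hG, Finset.mul_sum, Real.exp_sum]
      refine Finset.prod_congr rfl fun i _ => ?_
      by_cases h : ω i ∈ A
      · simp [hg, Set.indicator_of_mem h]
      · simp [hg, Set.indicator_of_notMem h]
    have : Real.exp (l * c) ≤ Real.exp (l * ∑ i, (A.indicator (fun _ => (1:ℝ)) (ω i))) :=
      Real.exp_le_exp.2 (mul_le_mul_of_nonneg_left hω hl)
    rw [Set.mem_setOf_eq, hGexp]
    exact this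
  have hmono := measure_mono (μ := (volume : Measure (Fin n → Ω))) hsub
  have htR : (volume {ω : Fin n → Ω | Real.exp (l * c) ≤ G ω}).toReal ≤ d := by
    have hexp : (0:ℝ) < Real.exp (l * c) := Real.exp_pos _
    rw [hGval] at hmarkov
    have := hmarkov.trans hb
    exact le_of_mul_le_mul_left this hexp
  have h1 : (volume {ω : Fin n → Ω | c ≤ ∑ i, (A.indicator (fun _ => (1:ℝ)) (ω i))}).toReal ≤ d :=
    le_trans (ENNReal.toReal_mono (measure_ne_top _ _) hmono) htR
  exact (ENNReal.le_ofReal_iff_toReal_le (measure_ne_top _ _) hd).2 h1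

section counting

variable {n : ℕ} {α : ℝ} (S : Fin n → ℝ)

lemma qset_nonempty (hn : 0 < n) (hα0 : 0 < α) :
    ((Finset.univ.image S).max' (Finset.image_nonempty.2 (Finset.univ_nonempty_iff.2 ⟨⟨0, hn⟩⟩))) ∈
      {t : ℝ | 1 - α ≤ ((Finset.univ.filter fun i => S i ≤ t).card : ℝ) / n} := by
  set M := (Finset.univ.image S).max' _ with hM
  have hfull : (Finset.univ.filter fun i => S i ≤ M) = Finset.univ := by
    refine Finset.filter_true_of_mem fun i _ => ?_
    exact Finset.le_max' _ _ (Finset.mem_image_of_mem S (Finset.mem_univ i))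
  simp only [Set.mem_setOf_eq, hfull, Finset.card_univ, Fintype.card_fin]
  rw [div_self (by positivity : ((n:ℝ)) ≠ 0)]
  linarith

lemma qset_bddBelow (hn : 0 < n) (hα1 : α < 1) :
    BddBelow {t : ℝ | 1 - α ≤ ((Finset.univ.filter fun i => S i ≤ t).card : ℝ) / n} := by
  haveI : Nonempty (Fin n) := ⟨⟨0, hn⟩⟩
  refine ⟨(Finset.univ.image S).min' (Finset.image_nonempty.2 Finset.univ_nonempty), ?_⟩
  intro t ht
  simp only [Set.mem_setOf_eq] at ht
  have hcard : 0 < (Finset.univ.filter fun i => S i ≤ t).card := by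
    by_contra h
    push_neg at h
    have h' : (Finset.univ.filter fun i => S i ≤ t).card = 0 := Nat.le_zero.mp h
    rw [h'] at ht
    simp at ht
    linarith
  obtain ⟨i, hi⟩ := Finset.card_pos.1 hcard
  have hit : S i ≤ t := (Finset.mem_filter.1 hi).2
  exact le_trans (Finset.min'_le _ _ (Finset.mem_image_of_mem S (Finset.mem_univ i))) hit

lemma q_mem (hn : 0 < n) (hα0 : 0 < α) (hα1 : α < 1) :
    (1 - α) * n ≤ ((Finset.univ.filter fun i => S i ≤ empQuant α S).card : ℝ) := by
  haveI : Nonempty (Fin n) := ⟨⟨0, hn⟩⟩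
  have hnpos : (0:ℝ) < n := by positivity
  set 𝒮 := {t : ℝ | 1 - α ≤ ((Finset.univ.filter fun i => S i ≤ t).card : ℝ) / n} with h𝒮
  have hne : 𝒮.Nonempty := ⟨_, qset_nonempty S hn hα0⟩
  have hbdd := qset_bddBelow S hn hα1
  set τ := empQuant α S with hτ
  have hτinf : τ = sInf 𝒮 := rfl
  have key : ∃ t ∈ 𝒮, ∀ i, S i ≤ t → S i ≤ τ := by
    by_cases hU : ((Finset.univ.image S).filter fun x => τ < x).Nonempty
    · set m := (((Finset.univ.image S).filter fun x => τ < x)).min' hU with hm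
      have hmτ : τ < m := (Finset.mem_filter.1 (Finset.min'_mem _ hU)).2
      obtain ⟨t, ht, hlt⟩ := exists_lt_of_csInf_lt hne (show sInf 𝒮 < m from hτinf ▸ hmτ)
      refine ⟨t, ht, fun i hit => ?_⟩
      by_contra hc
      push_neg at hc
      have hmem : S i ∈ ((Finset.univ.image S).filter fun x => τ < x) :=
        Finset.mem_filter.2 ⟨Finset.mem_image_of_mem S (Finset.mem_univ i), hc⟩
      have := Finset.min'_le _ _ hmem
      linarith
    · refine ⟨_, qset_nonempty S hn hα0, fun i _ => ?_⟩
      by_contra hc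
      push_neg at hc
      exact hU ⟨S i, Finset.mem_filter.2 ⟨Finset.mem_image_of_mem S (Finset.mem_univ i), hc⟩⟩
  obtain ⟨t, ht, hkey⟩ := key
  have hsubset : (Finset.univ.filter fun i => S i ≤ t) ⊆ (Finset.univ.filter fun i => S i ≤ τ) := by
    intro i hi
    exact Finset.mem_filter.2 ⟨Finset.mem_univ i, hkey i (Finset.mem_filter.1 hi).2⟩
  have hcard := Finset.card_le_card hsubset
  simp only [h𝒮, Set.mem_setOf_eq] at ht
  rw [le_div_iff₀ hnpos] at ht
  calc (1-α) * n ≤ ((Finset.univ.filter fun i => S i ≤ t).card : ℝ) := ht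
  _ ≤ _ := by exact_mod_cast hcard

lemma q_above (hn : 0 < n) (hα0 : 0 < α) (hα1 : α < 1) :
    α * n ≤ ((Finset.univ.filter fun i => empQuant α S ≤ S i).card : ℝ) := by
  haveI : Nonempty (Fin n) := ⟨⟨0, hn⟩⟩
  have hnpos : (0:ℝ) < n := by positivity
  set 𝒮 := {t : ℝ | 1 - α ≤ ((Finset.univ.filter fun i => S i ≤ t).card : ℝ) / n} with h𝒮
  have hbdd := qset_bddBelow S hn hα1
  set τ := empQuant α S with hτ
  have hτinf : τ = sInf 𝒮 := rfl
  set Lf := Finset.univ.filter fun i => S i < τ with hLf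
  have hLcard : ((Lf.card : ℝ)) ≤ (1 - α) * n := by
    by_cases hL : Lf.Nonempty
    · have hmax := (Lf.image S).max'_mem (Finset.image_nonempty.2 hL)
      obtain ⟨i0, hi0L, hi0S⟩ := Finset.mem_image.1 hmax
      set t := (Lf.image S).max' (Finset.image_nonempty.2 hL) with htdef
      have htτ : t < τ := hi0S ▸ (Finset.mem_filter.1 hi0L).2
      have htnot : t ∉ 𝒮 := by
        intro hmem
        have := csInf_le hbdd hmem
        rw [← hτinf] at this
        linarith
      simp only [h𝒮, Set.mem_setOf_eq, not_le] at htnot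
      rw [div_lt_iff₀ hnpos] at htnot
      have hsub : Lf ⊆ Finset.univ.filter fun i => S i ≤ t := by
        intro i hi
        refine Finset.mem_filter.2 ⟨Finset.mem_univ i, ?_⟩
        exact Finset.le_max' _ _ (Finset.mem_image_of_mem S hi)
      have := Finset.card_le_card hsub
      calc ((Lf.card : ℝ)) ≤ ((Finset.univ.filter fun i => S i ≤ t).card : ℝ) := by exact_mod_cast this
      _ ≤ (1-α)*n := htnot.le
    · rw [Finset.not_nonempty_iff_eq_empty] at hL
      rw [hL]
      simp
      nlinarith
  have hsplit : Lf.card + (Finset.univ.filter fun i => τ ≤ S i).card = n := by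
    have h1 : (Finset.univ.filter fun i => ¬ S i < τ) = (Finset.univ.filter fun i => τ ≤ S i) := by
      apply Finset.filter_congr
      intro i _
      simp [not_lt]
    rw [hLf, ← h1, Finset.card_filter_add_card_filter_not]
    simp
  have : ((Finset.univ.filter fun i => τ ≤ S i).card : ℝ) = n - Lf.card := by
    have := hsplit
    push_cast [← this]
    ring
  rw [this]
  linarith

end counting




lemma meas_Iic_eq (μ : Measure ℝ) [IsProbabilityMeasure μ] {F : ℝ → ℝ}
    (hFeq : ∀ t, F t = (μ (Iic t)).toReal) (t : ℝ) : μ (Iic t) = ENNReal.ofReal (F t) := by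
  rw [hFeq, ENNReal.ofReal_toReal (measure_ne_top μ _)]

lemma meas_lower (μ : Measure ℝ) [IsProbabilityMeasure μ] (F : ℝ → ℝ) (hFmono : Monotone F)
    (hFeq : ∀ t, F t = (μ (Iic t)).toReal) (p : ℝ) (hp : 0 ≤ p) :
    μ {x | F x < p} ≤ ENNReal.ofReal p := by
  set B := {x : ℝ | F x < p} with hB
  by_cases hne : B.Nonempty
  · have hlower : ∀ x ∈ B, ∀ y ≤ x, y ∈ B := fun x hx y hxy =>
      lt_of_le_of_lt (hFmono hxy) hx
    by_cases hbdd : BddAbove B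
    · set u := sSup B with hu
      by_cases huB : u ∈ B
      · have hsub : B ⊆ Iic u := fun x hx => le_csSup hbdd hx
        calc μ B ≤ μ (Iic u) := measure_mono hsub
        _ = ENNReal.ofReal (F u) := meas_Iic_eq μ hFeq u
        _ ≤ ENNReal.ofReal p := ENNReal.ofReal_le_ofReal (le_of_lt huB)
      · have hsub : B ⊆ Iio u := by
          intro x hx
          rcases lt_or_eq_of_le (le_csSup hbdd hx) with h | h
          · exact h
          · rw [hu, ← h]; exact absurd hx (by rw [h] at hx; exact fun _ => huB hx)
        have hun : Iio u = ⋃ m : ℕ, Iic (u - 1/(m+1)) := by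
          ext x
          simp only [mem_Iio, mem_iUnion, mem_Iic]
          constructor
          · intro hx
            obtain ⟨m, hm⟩ := exists_nat_one_div_lt (show (0:ℝ) < u - x by linarith)
            exact ⟨m, by push_cast at hm ⊢; linarith⟩
          · rintro ⟨m, hm⟩
            have : (0:ℝ) < 1/(m+1) := by positivity
            linarith
        have hmono : Monotone fun m : ℕ => Iic (u - 1/(m+1 : ℝ)) := by
          intro a b hab x hx
          simp only [mem_Iic] at *
          have h1 : 1/((b:ℝ)+1) ≤ 1/((a:ℝ)+1) := by
            apply one_div_le_one_div_of_le
            · positivity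
            · exact_mod_cast by omega
          linarith
        have htend := tendsto_measure_iUnion_atTop (μ := μ) hmono
        rw [← hun] at htend
        have hbound : ∀ m : ℕ, μ (Iic (u - 1/(m+1 : ℝ))) ≤ ENNReal.ofReal p := by
          intro m
          have hlt : u - 1/(m+1 : ℝ) < u := by
            have : (0:ℝ) < 1/(m+1) := by positivity
            linarith
          obtain ⟨x, hxB, hxgt⟩ := exists_lt_of_lt_csSup hne (hu ▸ hlt)
          have : F (u - 1/(m+1:ℝ)) < p := lt_of_le_of_lt (hFmono hxgt.le) hxB
          rw [meas_Iic_eq μ hFeq]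
          exact ENNReal.ofReal_le_ofReal this.le
        have := le_of_tendsto' htend hbound
        exact le_trans (measure_mono hsub) this
    · -- not bounded above: B = univ
      have hBuniv : B = univ := by
        rw [eq_univ_iff_forall]
        intro y
        obtain ⟨x, hxB, hxgt⟩ := not_bddAbove_iff.1 hbdd y
        exact hlower x hxB y hxgt.le
      have htend := tendsto_measure_Iic_atTop (μ := μ)
      have hbound : ∀ᶠ m : ℝ in atTop, μ (Iic m) ≤ ENNReal.ofReal p := by
        refine Eventually.of_forall fun m => ?_
        have : F m < p := by
          have : m ∈ B := hBuniv ▸ mem_univ m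
          exact this
        rw [meas_Iic_eq μ hFeq]
        exact ENNReal.ofReal_le_ofReal this.le
      have := le_of_tendsto htend hbound
      calc μ B ≤ μ univ := measure_mono (subset_univ B)
      _ ≤ ENNReal.ofReal p := this
  · rw [not_nonempty_iff_eq_empty] at hne
    rw [hne]
    simp

lemma meas_upper (μ : Measure ℝ) [IsProbabilityMeasure μ] (hno : ∀ t : ℝ, μ {t} = 0)
    (F : ℝ → ℝ) (hFmono : Monotone F)
    (hFeq : ∀ t, F t = (μ (Iic t)).toReal) (β : ℝ) (hβ0 : 0 < β) (hβ1 : β < 1) :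
    μ {x | β < F x} ≤ ENNReal.ofReal (1 - β) := by
  set T := {t : ℝ | β ≤ F t} with hT
  -- T nonempty
  have hne : T.Nonempty := by
    have h1 : ENNReal.ofReal β < μ univ := by
      rw [measure_univ]
      exact lt_of_lt_of_le (by simpa using ENNReal.ofReal_lt_one.2 hβ1) le_rfl
    have := (tendsto_measure_Iic_atTop (μ := μ)).eventually (eventually_gt_nhds h1)
    obtain ⟨t, ht⟩ := this.exists
    refine ⟨t, ?_⟩
    rw [hT, mem_setOf_eq, hFeq]
    have := le_of_lt ht
    exact (ENNReal.ofReal_le_iff_le_toReal (measure_ne_top μ _)).1 this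
  -- T bddBelow
  have hbdd : BddBelow T := by
    by_contra hb
    have hforall : ∀ m : ℕ, ENNReal.ofReal β ≤ μ (Iic (-(m:ℝ))) := by
      intro m
      obtain ⟨t, htT, htlt⟩ := not_bddBelow_iff.1 hb (-(m:ℝ))
      have : ENNReal.ofReal β ≤ μ (Iic t) := by
        rw [meas_Iic_eq μ hFeq]
        exact ENNReal.ofReal_le_ofReal htT
      exact le_trans this (measure_mono (Iic_subset_Iic.2 htlt.le))
    have hanti : Antitone fun m : ℕ => Iic (-(m:ℝ)) := by
      intro a b hab x hx
      simp only [mem_Iic] at *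
      have : (a:ℝ) ≤ b := by exact_mod_cast hab
      linarith
    have hempty : (⋂ m : ℕ, Iic (-(m:ℝ))) = ∅ := by
      ext x
      simp only [mem_iInter, mem_Iic, mem_empty_iff_false, iff_false, not_forall, not_le]
      obtain ⟨m, hm⟩ := exists_nat_gt (-x)
      exact ⟨m, by linarith⟩
    have htend := tendsto_measure_iInter_atTop (μ := μ)
      (fun m => (measurableSet_Iic).nullMeasurableSet) hanti ⟨0, measure_ne_top μ _⟩
    rw [hempty] at htend
    have := ge_of_tendsto htend (Eventually.of_forall hforall)
    simp only [measure_empty] at this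
    have h3 : ENNReal.ofReal β = 0 := le_antisymm this zero_le
    rw [ENNReal.ofReal_eq_zero] at h3
    linarith
  set t₀ := sInf T with ht₀
  -- μ (Iic t₀) ≥ ofReal β
  have hIic : ENNReal.ofReal β ≤ μ (Iic t₀) := by
    have hanti : Antitone fun m : ℕ => Iic (t₀ + 1/(m+1 : ℝ)) := by
      intro a b hab x hx
      simp only [mem_Iic] at *
      have h1 : 1/((b:ℝ)+1) ≤ 1/((a:ℝ)+1) := by
        apply one_div_le_one_div_of_le
        · positivity
        · exact_mod_cast by omega
      linarith
    have hinter : (⋂ m : ℕ, Iic (t₀ + 1/(m+1 : ℝ))) = Iic t₀ := by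
      ext x
      simp only [mem_iInter, mem_Iic]
      constructor
      · intro h
        by_contra hx
        push_neg at hx
        obtain ⟨m, hm⟩ := exists_nat_one_div_lt (show (0:ℝ) < x - t₀ by linarith)
        have := h m
        push_cast at hm
        linarith
      · intro h m
        have : (0:ℝ) < 1/(m+1) := by positivity
        linarith
    have htend := tendsto_measure_iInter_atTop (μ := μ)
      (fun m => (measurableSet_Iic).nullMeasurableSet) hanti ⟨0, measure_ne_top μ _⟩
    rw [hinter] at htend
    refine ge_of_tendsto htend (Eventually.of_forall fun m => ?_)
    have hlt : t₀ < t₀ + 1/(m+1:ℝ) := by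
      have : (0:ℝ) < 1/(m+1) := by positivity
      linarith
    obtain ⟨t, htT, htlt⟩ := exists_lt_of_csInf_lt hne (ht₀ ▸ hlt)
    have h1 : ENNReal.ofReal β ≤ μ (Iic t) := by
      rw [meas_Iic_eq μ hFeq]
      exact ENNReal.ofReal_le_ofReal htT
    exact le_trans h1 (measure_mono (Iic_subset_Iic.2 htlt.le))
  -- μ (Iio t₀) ≥ ofReal β
  have hIio : ENNReal.ofReal β ≤ μ (Iio t₀) := by
    have : μ (Iic t₀) ≤ μ (Iio t₀) + μ {t₀} := by
      rw [show Iic t₀ = Iio t₀ ∪ {t₀} by ext x; simp [le_iff_lt_or_eq]]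
      exact measure_union_le _ _
    rw [hno t₀, add_zero] at this
    exact le_trans hIic this
  -- conclude
  have hsub : {x | β < F x} ⊆ (Iio t₀)ᶜ := by
    intro x hx
    simp only [mem_compl_iff, mem_Iio, not_lt]
    by_contra hc
    push_neg at hc
    have : x ∉ T := fun hmem => absurd (csInf_le hbdd hmem) (by rw [← ht₀]; linarith)
    rw [hT, mem_setOf_eq, not_le] at this
    exact absurd hx (by simp only [mem_setOf_eq, not_lt]; linarith)
  calc μ {x | β < F x} ≤ μ ((Iio t₀)ᶜ) := measure_mono hsub
  _ = 1 - μ (Iio t₀) := prob_compl_eq_one_sub measurableSet_Iio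
  _ ≤ 1 - ENNReal.ofReal β := tsub_le_tsub_left hIio 1
  _ = ENNReal.ofReal (1 - β) := by
      rw [ENNReal.ofReal_sub 1 hβ0.le, ENNReal.ofReal_one]

end helpers


set_option maxHeartbeats 1000000 in
/-- Proposition 2 of the paper: with
`γ_n(δ) = (4 log(1/δ))/(3n) + sqrt(((4/(3n)) log(1/δ))² + (2α(1-α)/n) log(1/δ))`,
with probability at least `1 - δ` the sample-conditional coverage `F(τ̂_n)` is at least
`1 - α - γ_n(δ)`; and if the score `S = s(X,Y)` has a Lebesgue density, then with
probability at least `1 - 2δ` also `F(τ̂_n) ≤ 1 - α + γ_n(δ)`. -/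
theorem statement_2
    {𝒳 𝒴 : Type*} [MeasurableSpace 𝒳] [MeasurableSpace 𝒴]
    (P : Measure (𝒳 × 𝒴)) [IsProbabilityMeasure P]
    (s : 𝒳 × 𝒴 → ℝ) (hs : Measurable s)
    (n : ℕ) (hn : 0 < n)
    (α : ℝ) (hα : α ∈ Set.Ioo (0 : ℝ) 1)
    (δ : ℝ) (hδ : δ ∈ Set.Ioo (0 : ℝ) 1)
    (γn : ℝ)
    (hγn : γn = 4 * Real.log (1 / δ) / (3 * n) +
      Real.sqrt ((4 / (3 * n) * Real.log (1 / δ)) ^ 2 +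
        2 * α * (1 - α) / n * Real.log (1 / δ)))
    (F : ℝ → ℝ) (hF : ∀ t, F t = (P {p | s p ≤ t}).toReal) :
    (1 - δ ≤
      ((Measure.pi fun _ : Fin n => P)
        {ω | 1 - α - γn ≤ F (empQuant α fun i => s (ω i))}).toReal) ∧
    (P.map s ≪ volume →
      1 - 2 * δ ≤
        ((Measure.pi fun _ : Fin n => P)
          {ω | 1 - α - γn ≤ F (empQuant α fun i => s (ω i)) ∧
               F (empQuant α fun i => s (ω i)) ≤ 1 - α + γn}).toReal) := by
  obtain ⟨hα0, hα1⟩ := hα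
  obtain ⟨hδ0, hδ1⟩ := hδ
  have hnR : (0:ℝ) < n := Nat.cast_pos.2 hn
  set L := Real.log (1/δ) with hLdef
  have hLpos : 0 < L := Real.log_pos (by rw [lt_div_iff₀ hδ0]; linarith)
  have hexpL : Real.exp (-L) = δ := by
    rw [hLdef, one_div, Real.log_inv, neg_neg, Real.exp_log hδ0]
  have hγpos : 0 < γn := by
    rw [hγn]
    have h1 : 0 < 4 * L / (3*(n:ℝ)) := div_pos (by linarith) (by linarith)
    have h2 := Real.sqrt_nonneg ((4/(3*(n:ℝ))*L)^2 + 2*α*(1-α)/(n:ℝ)*L)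
    linarith
  have hγsq : γn^2 = 2*L/(n:ℝ)*(α*(1-α) + 4*γn/3) := by
    have hnn : (0:ℝ) ≤ (4/(3*(n:ℝ))*L)^2 + 2*α*(1-α)/(n:ℝ)*L := by
      have h2 : (0:ℝ) ≤ 2*α*(1-α)/(n:ℝ)*L := by
        apply mul_nonneg _ hLpos.le
        apply div_nonneg _ hnR.le
        nlinarith
      nlinarith [sq_nonneg (4/(3*(n:ℝ))*L)]
    have hsq := Real.sq_sqrt hnn
    rw [hγn]
    linear_combination hsq
  have hFmono : Monotone F := by
    intro a b hab
    rw [hF a, hF b]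
    exact ENNReal.toReal_mono (measure_ne_top _ _) (measure_mono fun x hx => le_trans hx hab)
  have hF0 : ∀ t, 0 ≤ F t := fun t => by rw [hF]; exact ENNReal.toReal_nonneg
  have hF1 : ∀ t, F t ≤ 1 := fun t => by
    rw [hF]
    calc (P _).toReal ≤ (1:ENNReal).toReal := ENNReal.toReal_mono ENNReal.one_ne_top prob_le_one
    _ = 1 := by simp
  have hFmeas : Measurable F := hFmono.measurable
  haveI : IsProbabilityMeasure (P.map s) := Measure.isProbabilityMeasure_map hs.aemeasurable
  have hFeq' : ∀ t, F t = ((P.map s) (Set.Iic t)).toReal := fun t => by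
    rw [hF, Measure.map_apply hs measurableSet_Iic]
    rfl
  -- claim 1
  have claim1 : (Measure.pi fun _ : Fin n => P)
      {ω : Fin n → 𝒳 × 𝒴 | F (empQuant α fun i => s (ω i)) < 1 - α - γn} ≤ ENNReal.ofReal δ := by
    by_cases hcase : 1 - α - γn ≤ 0
    · have hempty : {ω : Fin n → 𝒳 × 𝒴 | F (empQuant α fun i => s (ω i)) < 1 - α - γn} = ∅ := by
        ext ω
        simp only [Set.mem_setOf_eq, Set.mem_empty_iff_false, iff_false, not_lt]
        exact le_trans hcase (hF0 _)
      rw [hempty]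
      simp
    · push_neg at hcase
      set p := 1 - α - γn with hpdef
      set A : Set (𝒳 × 𝒴) := s ⁻¹' {t | F t < p} with hAdef
      have hAmeas : MeasurableSet A := hs (hFmeas measurableSet_Iio)
      have hqle : P A ≤ ENNReal.ofReal p := by
        have h1 := meas_lower (P.map s) F hFmono hFeq' p hcase.le
        have hset : MeasurableSet {t : ℝ | F t < p} := hFmeas measurableSet_Iio
        rw [Measure.map_apply hs hset] at h1
        exact h1
      have hqR : (P A).toReal ≤ p :=
        (ENNReal.le_ofReal_iff_toReal_le (measure_ne_top _ _) hcase.le).1 hqle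
      set W := α*(1-α) + 4*γn/3 with hWdef
      set l := γn / W with hldef
      have hvpos : 0 < α*(1-α) := mul_pos hα0 (by linarith)
      have hWpos : 0 < W := by rw [hWdef]; linarith
      have hl0 : 0 ≤ l := le_of_lt (div_pos hγpos hWpos)
      have hps := per_sample (v := α*(1-α)) (γ := γn) (L := L) (N := (n:ℝ)) (p := p) (a := 1-α)
        hvpos hγpos hnR hcase.le (by linarith) (by rw [hpdef]; ring) (by ring) hγsq
      rw [← hWdef, ← hldef] at hps
      have helm : (0:ℝ) ≤ Real.exp l - 1 := by nlinarith [Real.add_one_le_exp l]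
      have hqnn : (0:ℝ) ≤ (P A).toReal := ENNReal.toReal_nonneg
      have hb : (1 + (P A).toReal * (Real.exp l - 1)) ^ n
          ≤ Real.exp (l * ((n:ℝ)*(1-α))) * δ := by
        have h1 : 1 + (P A).toReal * (Real.exp l - 1) ≤ Real.exp (l*(1-α) - L/(n:ℝ)) := by
          refine le_trans ?_ hps
          have hmm := mul_le_mul_of_nonneg_right hqR helm
          clear_value A p W l
          linarith
        have h0 : 0 ≤ 1 + (P A).toReal * (Real.exp l - 1) := by nlinarith
        calc (1 + (P A).toReal * (Real.exp l - 1)) ^ n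
            ≤ (Real.exp (l*(1-α) - L/(n:ℝ)))^n := pow_le_pow_left₀ h0 h1 n
        _ = Real.exp ((n:ℝ) * (l*(1-α) - L/(n:ℝ))) := by rw [← Real.exp_nat_mul]
        _ = Real.exp (l * ((n:ℝ)*(1-α)) + (- L)) := by congr 1; field_simp; ring
        _ = Real.exp (l * ((n:ℝ)*(1-α))) * δ := by rw [Real.exp_add, hexpL]
      have hcher := chernoff_bound P n A hAmeas l ((n:ℝ)*(1-α)) δ hl0 hδ0.le hb
      refine le_trans (measure_mono ?_) hcher
      intro ω hω
      simp only [Set.mem_setOf_eq] at hω ⊢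
      have hq1 := q_mem (fun i => s (ω i)) hn hα0 hα1
      have hsum : ∀ i : Fin n,
          (if s (ω i) ≤ empQuant α (fun i => s (ω i)) then (1:ℝ) else 0)
            ≤ A.indicator (fun _ => (1:ℝ)) (ω i) := by
        intro i
        by_cases h : s (ω i) ≤ empQuant α (fun i => s (ω i))
        · rw [if_pos h]
          have hmem : ω i ∈ A := by
            rw [hAdef]
            exact show F (s (ω i)) < p from lt_of_le_of_lt (hFmono h) hω
          rw [Set.indicator_of_mem hmem]
        · rw [if_neg h]
          exact Set.indicator_nonneg (fun _ _ => zero_le_one) _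
      calc (n:ℝ)*(1-α) = (1-α)*(n:ℝ) := by ring
      _ ≤ ((Finset.univ.filter fun i => s (ω i) ≤ empQuant α (fun i => s (ω i))).card : ℝ) := hq1
      _ = ∑ i, (if s (ω i) ≤ empQuant α (fun i => s (ω i)) then (1:ℝ) else 0) :=
          (Finset.sum_boole _ _).symm
      _ ≤ ∑ i, A.indicator (fun _ => (1:ℝ)) (ω i) := Finset.sum_le_sum fun i _ => hsum i
  -- part 1 conclusion
  have part1 : 1 - δ ≤
      ((Measure.pi fun _ : Fin n => P)
        {ω | 1 - α - γn ≤ F (empQuant α fun i => s (ω i))}).toReal := by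
    have h2 := measure_union_le (μ := Measure.pi fun _ : Fin n => P)
      {ω : Fin n → 𝒳 × 𝒴 | 1 - α - γn ≤ F (empQuant α fun i => s (ω i))}
      {ω : Fin n → 𝒳 × 𝒴 | 1 - α - γn ≤ F (empQuant α fun i => s (ω i))}ᶜ
    rw [Set.union_compl_self, measure_univ] at h2
    have hEc : {ω : Fin n → 𝒳 × 𝒴 | 1 - α - γn ≤ F (empQuant α fun i => s (ω i))}ᶜ
        = {ω : Fin n → 𝒳 × 𝒴 | F (empQuant α fun i => s (ω i)) < 1 - α - γn} := by
      ext ω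
      simp only [Set.mem_compl_iff, Set.mem_setOf_eq, not_le]
    rw [hEc] at h2
    have h3 : (1:ENNReal) ≤ (Measure.pi fun _ : Fin n => P)
        {ω : Fin n → 𝒳 × 𝒴 | 1 - α - γn ≤ F (empQuant α fun i => s (ω i))} + ENNReal.ofReal δ :=
      h2.trans (add_le_add_right claim1 _)
    have h4 : ENNReal.ofReal (1 - δ) ≤ (Measure.pi fun _ : Fin n => P)
        {ω : Fin n → 𝒳 × 𝒴 | 1 - α - γn ≤ F (empQuant α fun i => s (ω i))} := by
      rw [ENNReal.ofReal_sub 1 hδ0.le, ENNReal.ofReal_one]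
      exact tsub_le_iff_right.2 h3
    exact (ENNReal.ofReal_le_iff_le_toReal (measure_ne_top _ _)).1 h4
  refine ⟨part1, ?_⟩
  intro habs
  -- claim 2
  have claim2 : (Measure.pi fun _ : Fin n => P)
      {ω : Fin n → 𝒳 × 𝒴 | 1 - α + γn < F (empQuant α fun i => s (ω i))} ≤ ENNReal.ofReal δ := by
    by_cases hcase : 1 ≤ 1 - α + γn
    · have hempty : {ω : Fin n → 𝒳 × 𝒴 | 1 - α + γn < F (empQuant α fun i => s (ω i))} = ∅ := by
        ext ω
        simp only [Set.mem_setOf_eq, Set.mem_empty_iff_false, iff_false, not_lt]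
        exact le_trans (hF1 _) hcase
      rw [hempty]
      simp
    · push_neg at hcase
      set β := 1 - α + γn with hβdef
      have hβ0 : 0 < β := by rw [hβdef]; linarith
      have hno : ∀ t : ℝ, (P.map s) {t} = 0 := fun t => habs Real.volume_singleton
      set A : Set (𝒳 × 𝒴) := s ⁻¹' {t | β < F t} with hAdef
      have hAmeas : MeasurableSet A := hs (hFmeas measurableSet_Ioi)
      have hqle : P A ≤ ENNReal.ofReal (1 - β) := by
        have h1 := meas_upper (P.map s) hno F hFmono hFeq' β hβ0 hcase
        have hset : MeasurableSet {t : ℝ | β < F t} := hFmeas measurableSet_Ioi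
        rw [Measure.map_apply hs hset] at h1
        exact h1
      have h1β : 0 ≤ 1 - β := by linarith
      have hqR : (P A).toReal ≤ 1 - β :=
        (ENNReal.le_ofReal_iff_toReal_le (measure_ne_top _ _) h1β).1 hqle
      set W := α*(1-α) + 4*γn/3 with hWdef
      set l := γn / W with hldef
      have hvpos : 0 < α*(1-α) := mul_pos hα0 (by linarith)
      have hWpos : 0 < W := by rw [hWdef]; linarith
      have hl0 : 0 ≤ l := le_of_lt (div_pos hγpos hWpos)
      have hps := per_sample (v := α*(1-α)) (γ := γn) (L := L) (N := (n:ℝ)) (p := 1-β) (a := α)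
        hvpos hγpos hnR h1β (by linarith) (by rw [hβdef]; ring) (by ring) hγsq
      rw [← hWdef, ← hldef] at hps
      have helm : (0:ℝ) ≤ Real.exp l - 1 := by nlinarith [Real.add_one_le_exp l]
      have hqnn : (0:ℝ) ≤ (P A).toReal := ENNReal.toReal_nonneg
      have hb : (1 + (P A).toReal * (Real.exp l - 1)) ^ n
          ≤ Real.exp (l * ((n:ℝ)*α)) * δ := by
        have h1 : 1 + (P A).toReal * (Real.exp l - 1) ≤ Real.exp (l*α - L/(n:ℝ)) := by
          refine le_trans ?_ hps
          have hmm := mul_le_mul_of_nonneg_right hqR helm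
          clear_value A β W l
          linarith
        have h0 : 0 ≤ 1 + (P A).toReal * (Real.exp l - 1) := by nlinarith
        calc (1 + (P A).toReal * (Real.exp l - 1)) ^ n
            ≤ (Real.exp (l*α - L/(n:ℝ)))^n := pow_le_pow_left₀ h0 h1 n
        _ = Real.exp ((n:ℝ) * (l*α - L/(n:ℝ))) := by rw [← Real.exp_nat_mul]
        _ = Real.exp (l * ((n:ℝ)*α) + (- L)) := by congr 1; field_simp; ring
        _ = Real.exp (l * ((n:ℝ)*α)) * δ := by rw [Real.exp_add, hexpL]
      have hcher := chernoff_bound P n A hAmeas l ((n:ℝ)*α) δ hl0 hδ0.le hb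
      refine le_trans (measure_mono ?_) hcher
      intro ω hω
      simp only [Set.mem_setOf_eq] at hω ⊢
      have hq1 := q_above (fun i => s (ω i)) hn hα0 hα1
      have hsum : ∀ i : Fin n,
          (if empQuant α (fun i => s (ω i)) ≤ s (ω i) then (1:ℝ) else 0)
            ≤ A.indicator (fun _ => (1:ℝ)) (ω i) := by
        intro i
        by_cases h : empQuant α (fun i => s (ω i)) ≤ s (ω i)
        · rw [if_pos h]
          have hmem : ω i ∈ A := by
            rw [hAdef]
            exact show β < F (s (ω i)) from lt_of_lt_of_le hω (hFmono h)
          rw [Set.indicator_of_mem hmem]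
        · rw [if_neg h]
          exact Set.indicator_nonneg (fun _ _ => zero_le_one) _
      calc (n:ℝ)*α = α*(n:ℝ) := by ring
      _ ≤ ((Finset.univ.filter fun i => empQuant α (fun i => s (ω i)) ≤ s (ω i)).card : ℝ) := hq1
      _ = ∑ i, (if empQuant α (fun i => s (ω i)) ≤ s (ω i) then (1:ℝ) else 0) :=
          (Finset.sum_boole _ _).symm
      _ ≤ ∑ i, A.indicator (fun _ => (1:ℝ)) (ω i) := Finset.sum_le_sum fun i _ => hsum i
  -- part 2 conclusion
  have h2 := measure_union_le (μ := Measure.pi fun _ : Fin n => P)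
    {ω : Fin n → 𝒳 × 𝒴 | 1 - α - γn ≤ F (empQuant α fun i => s (ω i)) ∧
        F (empQuant α fun i => s (ω i)) ≤ 1 - α + γn}
    {ω : Fin n → 𝒳 × 𝒴 | 1 - α - γn ≤ F (empQuant α fun i => s (ω i)) ∧
        F (empQuant α fun i => s (ω i)) ≤ 1 - α + γn}ᶜ
  rw [Set.union_compl_self, measure_univ] at h2
  have hEc : {ω : Fin n → 𝒳 × 𝒴 | 1 - α - γn ≤ F (empQuant α fun i => s (ω i)) ∧
        F (empQuant α fun i => s (ω i)) ≤ 1 - α + γn}ᶜ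
      = {ω : Fin n → 𝒳 × 𝒴 | F (empQuant α fun i => s (ω i)) < 1 - α - γn} ∪
        {ω : Fin n → 𝒳 × 𝒴 | 1 - α + γn < F (empQuant α fun i => s (ω i))} := by
    ext ω
    simp only [Set.mem_compl_iff, Set.mem_setOf_eq, Set.mem_union, not_and_or, not_le]
  rw [hEc] at h2
  have h3 := (measure_union_le (μ := Measure.pi fun _ : Fin n => P)
    {ω : Fin n → 𝒳 × 𝒴 | F (empQuant α fun i => s (ω i)) < 1 - α - γn}
    {ω : Fin n → 𝒳 × 𝒴 | 1 - α + γn < F (empQuant α fun i => s (ω i))}).trans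
    (add_le_add claim1 claim2)
  have h4 : (1:ENNReal) ≤ (Measure.pi fun _ : Fin n => P)
      {ω : Fin n → 𝒳 × 𝒴 | 1 - α - γn ≤ F (empQuant α fun i => s (ω i)) ∧
        F (empQuant α fun i => s (ω i)) ≤ 1 - α + γn} + ENNReal.ofReal (2*δ) := by
    have h5 : ENNReal.ofReal δ + ENNReal.ofReal δ = ENNReal.ofReal (2*δ) := by
      rw [show (2:ℝ)*δ = δ + δ by ring, ENNReal.ofReal_add hδ0.le hδ0.le]
    calc (1:ENNReal) ≤ _ + _ := h2
    _ ≤ _ + ENNReal.ofReal (2*δ) := by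
        rw [← h5]
        exact add_le_add_right h3 _
  have h6 : ENNReal.ofReal (1 - 2*δ) ≤ (Measure.pi fun _ : Fin n => P)
      {ω : Fin n → 𝒳 × 𝒴 | 1 - α - γn ≤ F (empQuant α fun i => s (ω i)) ∧
        F (empQuant α fun i => s (ω i)) ≤ 1 - α + γn} := by
    rw [ENNReal.ofReal_sub 1 (by linarith : (0:ℝ) ≤ 2*δ), ENNReal.ofReal_one]
    exact tsub_le_iff_right.2 h4
  exact (ENNReal.ofReal_le_iff_le_toReal (measure_ne_top _ _)).1 h6
end

section
/- Let θ̂ minimize θ ↦ Σ_{i=1}^n ℓ_α(⟨θ, φ(X_i)⟩ − S_i) over ℝ^d and set ĥ(x) = ⟨θ̂, φ(x)⟩. Then for every u ∈ ℝ^d such that ⟨u, φ(x)⟩ ≥ 0 for all x ∈ 𝒳, (1/n) Σ_{i=1}^n ⟨φ(X_i), u⟩ · 1{S_i > ĥ(X_i)} ≤ α · (1/n) Σ_{i=1}^n ⟨φ(X_i), u⟩. -/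
open MeasureTheory

/-- The quantile (pinball) loss `ℓ_α(t) = α max(t,0) + (1-α) max(-t,0)`. -/
noncomputable def pinball (α t : ℝ) : ℝ := α * max t 0 + (1 - α) * max (-t) 0

lemma pinball_of_nonneg (α t : ℝ) (ht : 0 ≤ t) : pinball α t = α * t := by
  simp [pinball, max_eq_left ht, max_eq_right (neg_nonpos.mpr ht)]

lemma pinball_of_nonpos (α t : ℝ) (ht : t ≤ 0) : pinball α t = (1 - α) * (-t) := by
  simp [pinball, max_eq_right ht, max_eq_left (neg_nonneg.mpr ht)]

/-- Lemma: one-directional coverage, first part: if `θ̂` minimizes the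
empirical quantile loss and `ĥ(x) = ⟨θ̂, φ(x)⟩`, then for any `u` with `⟨u, φ(x)⟩ ≥ 0` for
all `x`, `(1/n) Σ_i ⟨φ(X_i), u⟩ 1{S_i > ĥ(X_i)} ≤ α (1/n) Σ_i ⟨φ(X_i), u⟩`. -/
theorem statement_10
    {𝒳 : Type*} (n d : ℕ)
    (α : ℝ) (hα : α ∈ Set.Ioo (0 : ℝ) 1)
    (φ : 𝒳 → EuclideanSpace ℝ (Fin d))
    (X : Fin n → 𝒳) (S : Fin n → ℝ)
    (θh : EuclideanSpace ℝ (Fin d))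
    (hmin : ∀ θ : EuclideanSpace ℝ (Fin d),
      ∑ i, pinball α ((inner ℝ θh (φ (X i)) : ℝ) - S i) ≤
        ∑ i, pinball α ((inner ℝ θ (φ (X i)) : ℝ) - S i)) :
    ∀ u : EuclideanSpace ℝ (Fin d), (∀ x, 0 ≤ (inner ℝ u (φ x) : ℝ)) →
      (1 / n : ℝ) * ∑ i, (inner ℝ u (φ (X i)) : ℝ) *
          (if (inner ℝ θh (φ (X i)) : ℝ) < S i then 1 else 0) ≤
        α * ((1 / n : ℝ) * ∑ i, (inner ℝ u (φ (X i)) : ℝ)) := by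
  intro u hu
  set a : Fin n → ℝ := fun i => (inner ℝ u (φ (X i)) : ℝ) with ha
  set t : Fin n → ℝ := fun i => (inner ℝ θh (φ (X i)) : ℝ) - S i with htdef
  have ha0 : ∀ i, 0 ≤ a i := fun i => hu (X i)
  -- choose a small positive ε
  set s : Finset ℝ :=
    insert 1 (Finset.univ.image fun i : Fin n =>
      if t i < 0 ∧ 0 < a i then (-t i) / (a i) else 1) with hs
  have hsne : s.Nonempty := ⟨1, Finset.mem_insert_self _ _⟩
  set ε : ℝ := s.min' hsne with hε
  have hεpos : 0 < ε := by
    apply (Finset.lt_min'_iff _ hsne).mpr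
    intro y hy
    rcases Finset.mem_insert.mp hy with h | h
    · simp [h]
    · obtain ⟨i, -, rfl⟩ := Finset.mem_image.mp h
      split
      · next hcond => exact div_pos (by linarith [hcond.1]) hcond.2
      · norm_num
  have hεle : ∀ i, t i < 0 → ε * a i ≤ - t i := by
    intro i hti
    rcases (ha0 i).eq_or_lt with h | h
    · rw [← h]; simpa using hti.le
    · have hle : ε ≤ (-t i) / a i := by
        apply Finset.min'_le
        exact Finset.mem_insert_of_mem
          (Finset.mem_image.mpr ⟨i, Finset.mem_univ i, by simp [hti, h]⟩)
      calc ε * a i ≤ ((-t i) / a i) * a i := by nlinarith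
        _ = -t i := div_mul_cancel₀ _ (ne_of_gt h)
  -- exact expansion of each pinball term
  have key : ∀ i, pinball α (t i + ε * a i) =
      pinball α (t i) + ε * (a i * (α - (if t i < 0 then 1 else 0))) := by
    intro i
    by_cases hti : t i < 0
    · have h1 : t i + ε * a i ≤ 0 := by linarith [hεle i hti]
      rw [pinball_of_nonpos α _ h1, pinball_of_nonpos α _ hti.le]
      simp only [hti, if_true]; ring
    · push_neg at hti
      have h1 : 0 ≤ t i + ε * a i := by nlinarith [ha0 i, hεpos.le]
      rw [pinball_of_nonneg α _ h1, pinball_of_nonneg α _ hti]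
      simp only [not_lt.mpr hti, if_false]; ring
  have hmin' := hmin (θh + ε • u)
  have hinner : ∀ i, (inner ℝ (θh + ε • u) (φ (X i)) : ℝ) - S i = t i + ε * a i := by
    intro i
    simp only [inner_add_left, real_inner_smul_left, htdef, ha]; ring
  simp only [hinner, key, Finset.sum_add_distrib] at hmin'
  have hsum : (0 : ℝ) ≤ ∑ i, a i * (α - (if t i < 0 then 1 else 0)) := by
    have h2 : (0 : ℝ) ≤ ∑ i, ε * (a i * (α - (if t i < 0 then 1 else 0))) := by
      linarith
    rw [← Finset.mul_sum] at h2
    exact nonneg_of_mul_nonneg_right h2 hεpos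
  have hind : ∀ i, (if (inner ℝ θh (φ (X i)) : ℝ) < S i then (1:ℝ) else 0)
      = (if t i < 0 then 1 else 0) := by
    intro i
    congr 1
    simp [htdef, sub_neg]
  simp only [hind]
  have hexp : ∑ i, a i * (α - (if t i < 0 then 1 else 0))
      = α * (∑ i, a i) - ∑ i, a i * (if t i < 0 then 1 else 0) := by
    rw [Finset.mul_sum, ← Finset.sum_sub_distrib]
    congr 1; ext i; ring
  rw [hexp] at hsum
  have hn : (0 : ℝ) ≤ 1 / n := by positivity
  nlinarith [mul_le_mul_of_nonneg_left (by linarith : ∑ i, a i * (if t i < 0 then 1 else 0) ≤ α * ∑ i, a i) hn]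
end
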